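/- arXiv:2304.05651 — 3 statements merged into one kernel-verified Lean document; each statement's English description precedes it below -/
import Mathlib

section
/- If X ∼ DB_λ(α,θ), then Var(X) = θα(1 + θ(1−λ) e_λ^{−λ}(θ)) e_λ^{1−λ}(θ), where e_λ^x(θ) = (1+λθ)^{x/λ}. -/
open Real MeasureTheory ProbabilityTheory Filter Asymptotics

/-- The degenerate falling factorial `(x)_{n,l} = x(x-l)(x-2l)...(x-(n-1)l)`. -/
noncomputable def dFall (l x : ℝ) (n : ℕ) : ℝ := ∏ i ∈ Finset.range n, (x - i * l)

/-- The degenerate exponential `e_l^x(t) = (1 + l t)^(x/l)`. -/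
noncomputable def degExp (l x t : ℝ) : ℝ := (1 + l * t) ^ (x / l)

open Real Filter

lemma sum_aux (c : ℕ → ℝ) (hc : ∀ r : ℝ, 0 < r → Summable fun n : ℕ => |c n| * r ^ n)
    {r : ℝ} (hr : 0 < r) : Summable fun n : ℕ => (n : ℝ) * |c n| * r ^ (n - 1) := by
  have hhalf : Summable fun n : ℕ => (n : ℝ) * (1/2 : ℝ) ^ n := by
    have := summable_pow_mul_geometric_of_norm_lt_one (R := ℝ) 1 (by norm_num : ‖(1/2:ℝ)‖ < 1)
    simpa using this
  have htend : Tendsto (fun n : ℕ => (n : ℝ) * (1/2 : ℝ) ^ n) atTop (nhds 0) :=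
    hhalf.tendsto_atTop_zero
  obtain ⟨M, hM⟩ := htend.bddAbove_range
  have hMle : ∀ n : ℕ, (n : ℝ) * (1/2 : ℝ) ^ n ≤ M := fun n => hM ⟨n, rfl⟩
  refine Summable.of_nonneg_of_le (fun n => by positivity) (fun n => ?_)
    (((hc (2*r) (by positivity)).mul_left (M/r)))
  rcases n with _ | n
  · have hM0 : (0:ℝ) ≤ M := by simpa using hMle 0
    simp
    exact mul_nonneg (div_nonneg hM0 hr.le) (abs_nonneg _)
  · have h1 : ((n:ℝ)+1) * (1/2:ℝ)^(n+1) ≤ M := by simpa [Nat.cast_succ] using hMle (n+1)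
    have h2 : ((n:ℝ)+1) * r ^ n ≤ M / r * (2*r)^(n+1) := by
      have : ((n:ℝ)+1) * r ^ n = (((n:ℝ)+1) * (1/2:ℝ)^(n+1)) * ((2*r)^(n+1) / r) := by
        field_simp [mul_pow]
        rw [← mul_pow, ← mul_assoc]; norm_num [pow_succ]
      rw [this]
      have h4 := mul_le_mul_of_nonneg_right h1 (show (0:ℝ) ≤ (2*r)^(n+1)/r by positivity)
      have h3 : M * ((2*r)^(n+1)/r) = M / r * (2*r)^(n+1) := by ring
      linarith
    calc ((n+1 : ℕ) : ℝ) * |c (n+1)| * r ^ (n + 1 - 1)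
        = (((n:ℝ)+1) * r ^ n) * |c (n+1)| := by push_cast; ring
      _ ≤ (M / r * (2*r)^(n+1)) * |c (n+1)| :=
          mul_le_mul_of_nonneg_right h2 (abs_nonneg _)
      _ = M / r * (|c (n+1)| * (2*r) ^ (n+1)) := by ring

lemma summable_pow_of_abs (c : ℕ → ℝ) (hc : ∀ r : ℝ, 0 < r → Summable fun n : ℕ => |c n| * r ^ n)
    {r : ℝ} (hr : 0 < r) {x : ℝ} (hx : |x| ≤ r) :
    Summable fun n : ℕ => c n * x ^ n := by
  refine Summable.of_abs (Summable.of_nonneg_of_le (fun n => abs_nonneg _) (fun n => ?_) (hc r hr))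
  rw [abs_mul, abs_pow]
  exact mul_le_mul_of_nonneg_left (pow_le_pow_left₀ (abs_nonneg x) hx n) (abs_nonneg _)

lemma summable_deriv_pow (c : ℕ → ℝ) (hc : ∀ r : ℝ, 0 < r → Summable fun n : ℕ => |c n| * r ^ n)
    {r : ℝ} (hr : 0 < r) {x : ℝ} (hx : |x| ≤ r) :
    Summable fun n : ℕ => c n * ((n : ℝ) * x ^ (n - 1)) := by
  refine Summable.of_abs (Summable.of_nonneg_of_le (fun n => abs_nonneg _) (fun n => ?_)
    (sum_aux c hc hr))
  rw [abs_mul, abs_mul, abs_pow, Nat.abs_cast]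
  calc |c n| * ((n:ℝ) * |x| ^ (n-1)) ≤ |c n| * ((n:ℝ) * r ^ (n-1)) := by
        exact mul_le_mul_of_nonneg_left (mul_le_mul_of_nonneg_left
          (pow_le_pow_left₀ (abs_nonneg x) hx _) (Nat.cast_nonneg n)) (abs_nonneg _)
    _ = (n:ℝ) * |c n| * r ^ (n-1) := by ring

lemma hasDerivAt_tsum_pow (c : ℕ → ℝ)
    (hc : ∀ r : ℝ, 0 < r → Summable fun n : ℕ => |c n| * r ^ n) (t : ℝ) :
    HasDerivAt (fun x : ℝ => ∑' n : ℕ, c n * x ^ n)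
      (∑' n : ℕ, c n * ((n : ℝ) * t ^ (n - 1))) t := by
  set r : ℝ := |t| + 1 with hrdef
  have hr : 0 < r := by positivity
  have ht : t ∈ Metric.ball (0:ℝ) r := by
    simp [Metric.mem_ball, Real.dist_eq, hrdef]
  refine hasDerivAt_of_tendstoUniformlyOn (l := atTop) (g := fun x : ℝ => ∑' n : ℕ, c n * x ^ n) (g' := fun x : ℝ => ∑' n : ℕ, c n * ((n:ℝ) * x ^ (n-1))) (f := fun N x => ∑ n ∈ Finset.range N, c n * x ^ n)
    (f' := fun N x => ∑ n ∈ Finset.range N, c n * ((n:ℝ) * x ^ (n-1)))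
    Metric.isOpen_ball ?_ ?_ ?_ ht
  · have hb : ∀ (n : ℕ) (x : ℝ), x ∈ Metric.ball (0:ℝ) r →
        ‖c n * ((n:ℝ) * x ^ (n-1))‖ ≤ (n:ℝ) * |c n| * r ^ (n-1) := by
      intro n x hxm
      have hx : |x| ≤ r := by
        have := Metric.mem_ball.mp hxm
        rw [Real.dist_eq, sub_zero] at this
        exact this.le
      rw [Real.norm_eq_abs, abs_mul, abs_mul, abs_pow, Nat.abs_cast]
      calc |c n| * ((n:ℝ) * |x| ^ (n-1)) ≤ |c n| * ((n:ℝ) * r ^ (n-1)) :=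
            mul_le_mul_of_nonneg_left (mul_le_mul_of_nonneg_left
              (pow_le_pow_left₀ (abs_nonneg x) hx _) (Nat.cast_nonneg n)) (abs_nonneg _)
        _ = (n:ℝ) * |c n| * r ^ (n-1) := by ring
    exact tendstoUniformlyOn_tsum_nat (sum_aux c hc hr) hb
  · filter_upwards with N x _
    exact HasDerivAt.fun_sum fun n _ => (hasDerivAt_pow n x).const_mul (c n)
  · intro x hxm
    have hx : |x| ≤ r := by
      have := Metric.mem_ball.mp hxm
      rw [Real.dist_eq, sub_zero] at this
      exact this.le
    exact (summable_pow_of_abs c hc hr hx).hasSum.tendsto_sum_nat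

lemma shifted_abs_summable (c : ℕ → ℝ)
    (hc : ∀ r : ℝ, 0 < r → Summable fun n : ℕ => |c n| * r ^ n) :
    ∀ r : ℝ, 0 < r → Summable fun n : ℕ => |((n:ℝ)+1) * c (n+1)| * r ^ n := by
  intro r hr
  have h := (sum_aux c hc hr).comp_injective Nat.succ_injective
  refine h.congr fun n => ?_
  simp only [Function.comp_apply, Nat.succ_eq_add_one]
  rw [abs_mul]
  have : |((n:ℝ)+1)| = ((n:ℝ)+1) := abs_of_nonneg (by positivity)
  rw [this]
  push_cast
  ring_nf

lemma deriv_series_shift (c : ℕ → ℝ)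
    (hc : ∀ r : ℝ, 0 < r → Summable fun n : ℕ => |c n| * r ^ n) (t : ℝ) :
    (∑' n : ℕ, c n * ((n:ℝ) * t ^ (n-1))) = ∑' n : ℕ, ((n:ℝ)+1) * c (n+1) * t ^ n := by
  have hs : Summable fun n : ℕ => c n * ((n:ℝ) * t ^ (n-1)) :=
    summable_deriv_pow c hc (show (0:ℝ) < |t|+1 by positivity) (by linarith [abs_nonneg t])
  rw [Summable.tsum_eq_zero_add hs]
  simp only [Nat.cast_zero, zero_mul, mul_zero, zero_add]
  refine tsum_congr fun n => ?_
  push_cast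
  ring

open MeasureTheory in
lemma integral_comp_nat {Ω : Type*} [MeasurableSpace Ω] (P : Measure Ω)
    (X : Ω → ℕ) (hXmeas : Measurable X) (f : ℕ → ℝ) (hf0 : ∀ n, 0 ≤ f n) :
    ∫ ω, f (X ω) ∂P = (∑' n : ℕ, ENNReal.ofReal (f n) * P {ω | X ω = n}).toReal := by
  rw [integral_eq_lintegral_of_nonneg_ae (Filter.Eventually.of_forall fun ω => hf0 _)
    ((measurable_from_nat (f := f)).comp hXmeas).aestronglyMeasurable]
  congr 1
  have h1 : ∫⁻ ω, ENNReal.ofReal (f (X ω)) ∂P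
      = ∫⁻ n, ENNReal.ofReal (f n) ∂(P.map X) :=
    (lintegral_map (measurable_from_nat (f := fun n => ENNReal.ofReal (f n))) hXmeas).symm
  rw [h1, lintegral_countable']
  refine tsum_congr fun n => ?_
  rw [Measure.map_apply hXmeas (measurableSet_singleton n)]
  rfl

open MeasureTheory in
lemma integral_comp_nat_eq_tsum {Ω : Type*} [MeasurableSpace Ω] (P : Measure Ω)
    (X : Ω → ℕ) (hXmeas : Measurable X) (f : ℕ → ℝ) (hf0 : ∀ n, 0 ≤ f n)
    (p : ℕ → ℝ) (hp0 : ∀ n, 0 ≤ p n)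
    (hX : ∀ k : ℕ, P {ω | X ω = k} = ENNReal.ofReal (p k))
    (hs : Summable fun n => f n * p n) :
    ∫ ω, f (X ω) ∂P = ∑' n : ℕ, f n * p n := by
  rw [integral_comp_nat P X hXmeas f hf0]
  have h1 : ∀ n : ℕ, ENNReal.ofReal (f n) * P {ω | X ω = n} = ENNReal.ofReal (f n * p n) :=
    fun n => by rw [hX n, ← ENNReal.ofReal_mul (hf0 n)]
  rw [tsum_congr h1, ← ENNReal.ofReal_tsum_of_nonneg (fun n => mul_nonneg (hf0 n) (hp0 n)) hs,
    ENNReal.toReal_ofReal (tsum_nonneg fun n => mul_nonneg (hf0 n) (hp0 n))]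

theorem degenerate_bell_variance (l α θ : ℝ) (hl : l ∈ Set.Ioc (0 : ℝ) 1) (hα : 0 < α) (hθ : 0 < θ)
    (φ : ℕ → ℝ → ℝ)
    (hφ : ∀ x t : ℝ, 0 < 1 + l * t →
      HasSum (fun n : ℕ => φ n x * t ^ n / (n.factorial : ℝ))
        (Real.exp (x * (degExp l 1 t - 1))))
    {Ω : Type*} [MeasurableSpace Ω] (P : Measure Ω) [IsProbabilityMeasure P]
    (X : Ω → ℕ) (hXmeas : Measurable X)
    (hX : ∀ k : ℕ, P {ω | X ω = k} =
      ENNReal.ofReal (Real.exp (-(α * (degExp l 1 θ - 1))) * θ ^ k * φ k α / (k.factorial : ℝ))) :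
    (∫ ω, ((X ω : ℝ)) ^ 2 ∂P) - (∫ ω, (X ω : ℝ) ∂P) ^ 2 =
      θ * α * (1 + θ * (1 - l) * degExp l (-l) θ) * degExp l (1 - l) θ := by
  obtain ⟨hl0, hl1⟩ := hl
  have hx0 : (0:ℝ) < 1 + l * θ := by positivity
  have hdeg : ∀ t : ℝ, degExp l 1 t = (1 + l * t) ^ ((1:ℝ)/l) := fun t => rfl
  set C : ℝ := Real.exp (-(α * (degExp l 1 θ - 1))) with hC_def
  have hC : 0 < C := Real.exp_pos _
  set p : ℕ → ℝ := fun k => C * θ ^ k * φ k α / (k.factorial : ℝ) with hp_def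
  have hXp : ∀ k : ℕ, P {ω | X ω = k} = ENNReal.ofReal (p k) := fun k => hX k
  set F : ℝ → ℝ := fun t => Real.exp (α * (degExp l 1 t - 1)) with hF_def
  have hCF : C * F θ = 1 := by
    rw [hC_def, hF_def, ← Real.exp_add, neg_add_cancel, Real.exp_zero]
  -- HasSum p 1
  have hSp : HasSum p 1 := by
    have h := (hφ α θ hx0).mul_left C
    rw [show C * Real.exp (α * (degExp l 1 θ - 1)) = 1 from hCF] at h
    have hpe : p = fun i => C * (φ i α * θ ^ i / (i.factorial : ℝ)) := by
      funext n; rw [hp_def]; ring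
    rw [hpe]; exact h
  -- total probability
  have hmeasSet : ∀ k : ℕ, MeasurableSet {ω | X ω = k} :=
    fun k => hXmeas (measurableSet_singleton k)
  have hsum1 : (∑' k : ℕ, P {ω | X ω = k}) = 1 := by
    have hdisj : Pairwise (Function.onFun Disjoint fun k : ℕ => {ω | X ω = k}) := by
      intro i j hij
      rw [Function.onFun, Set.disjoint_left]
      rintro ω (h1 : X ω = i) (h2 : X ω = j)
      exact hij (h1 ▸ h2 ▸ rfl)
    rw [← measure_iUnion hdisj hmeasSet]
    have huniv : (⋃ k : ℕ, {ω | X ω = k}) = Set.univ := by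
      ext ω; simp
    rw [huniv, measure_univ]
  -- nonnegativity of p
  have hsum1' : (∑' k : ℕ, ENNReal.ofReal (p k)) = 1 := by
    rw [← hsum1]; exact tsum_congr fun k => (hXp k).symm
  have hppos : ∀ k, 0 ≤ p k := by
    have hmax : (∑' k : ℕ, max (p k) 0) = 1 := by
      have h := ENNReal.tsum_toReal_eq
        (fun k => (ENNReal.ofReal_ne_top : ENNReal.ofReal (p k) ≠ ⊤))
      rw [hsum1'] at h
      simp only [ENNReal.toReal_ofReal', ENNReal.toReal_one] at h
      exact h.symm
    have hmaxsum : Summable fun k : ℕ => max (p k) 0 := by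
      have h := ENNReal.summable_toReal (f := fun k => ENNReal.ofReal (p k))
        (by rw [hsum1']; exact ENNReal.one_ne_top)
      simpa only [ENNReal.toReal_ofReal'] using h
    intro k
    have hd : Summable fun k : ℕ => max (p k) 0 - p k := hmaxsum.sub hSp.summable
    have hdz : (∑' k : ℕ, (max (p k) 0 - p k)) = 0 := by
      rw [Summable.tsum_sub hmaxsum hSp.summable, hmax, hSp.tsum_eq, sub_self]
    have hterm : max (p k) 0 - p k ≤ ∑' k : ℕ, (max (p k) 0 - p k) :=
      Summable.le_tsum hd k (fun j _ => sub_nonneg.mpr (le_max_left _ _))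
    rw [hdz] at hterm
    have h0 : (0:ℝ) ≤ max (p k) 0 := le_max_right _ _
    linarith
  have hφpos : ∀ k, 0 ≤ φ k α := by
    intro k
    by_contra h
    push_neg at h
    have hneg : p k < 0 := by
      rw [hp_def]
      exact div_neg_of_neg_of_pos (mul_neg_of_pos_of_neg (by positivity) h) (by positivity)
    linarith [hppos k]
  -- coefficients
  set c : ℕ → ℝ := fun n => φ n α / (n.factorial : ℝ) with hc_def
  have hcpos : ∀ n, 0 ≤ c n := fun n => div_nonneg (hφpos n) (Nat.cast_nonneg _)
  have hcabs : ∀ r : ℝ, 0 < r → Summable fun n : ℕ => |c n| * r ^ n := by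
    intro r hr
    refine ((hφ α r (by positivity)).summable).congr fun n => ?_
    rw [abs_of_nonneg (hcpos n), hc_def]
    ring
  set d : ℕ → ℝ := fun n => ((n:ℝ) + 1) * c (n + 1) with hd_def
  have hdabs : ∀ r : ℝ, 0 < r → Summable fun n : ℕ => |d n| * r ^ n :=
    shifted_abs_summable c hcabs
  have habsθ : |θ| ≤ θ := le_of_eq (abs_of_pos hθ)
  -- the power series function and its derivatives
  have hgF : ∀ t : ℝ, 0 < t → (∑' n : ℕ, c n * t ^ n) = F t := by
    intro t ht
    have hxt : (0:ℝ) < 1 + l * t := by positivity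
    have h := hφ α t hxt
    have hfe : (fun n : ℕ => φ n α * t ^ n / (n.factorial : ℝ)) = fun n => c n * t ^ n := by
      funext n; rw [hc_def]; ring
    rw [hfe] at h
    exact h.tsum_eq
  have hgd : ∀ t : ℝ, HasDerivAt (fun x : ℝ => ∑' n : ℕ, c n * x ^ n)
      (∑' n : ℕ, d n * t ^ n) t := by
    intro t
    have h := hasDerivAt_tsum_pow c hcabs t
    rw [deriv_series_shift c hcabs t] at h
    exact h
  have hg1d : ∀ t : ℝ, HasDerivAt (fun x : ℝ => ∑' n : ℕ, d n * x ^ n)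
      (∑' n : ℕ, ((n:ℝ) + 1) * d (n + 1) * t ^ n) t := by
    intro t
    have h := hasDerivAt_tsum_pow d hdabs t
    rw [deriv_series_shift d hdabs t] at h
    exact h
  -- F-side derivatives
  have hrpow : ∀ (e : ℝ) (t : ℝ), 0 < t →
      HasDerivAt (fun y : ℝ => (1 + l * y) ^ e) (e * (1 + l * t) ^ (e - 1) * l) t := by
    intro e t ht
    have hxt : (0:ℝ) < 1 + l * t := by positivity
    have h1 : HasDerivAt (fun y : ℝ => 1 + l * y) l t := by
      simpa using ((hasDerivAt_id t).const_mul l).const_add 1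
    have h2 := (Real.hasDerivAt_rpow_const (x := 1 + l * t) (p := e) (Or.inl hxt.ne')).comp t h1
    simpa [Function.comp_def, mul_comm, mul_assoc] using h2
  have hFd : ∀ t : ℝ, 0 < t →
      HasDerivAt F (α * (1 + l * t) ^ ((1:ℝ)/l - 1) * F t) t := by
    intro t ht
    have h2 := hrpow ((1:ℝ)/l) t ht
    have h3 : HasDerivAt (fun y : ℝ => α * ((1 + l * y) ^ ((1:ℝ)/l) - 1))
        (α * ((1:ℝ)/l * (1 + l * t) ^ ((1:ℝ)/l - 1) * l)) t := (h2.sub_const 1).const_mul α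
    have h4 := h3.exp
    have hFe : F = fun y => Real.exp (α * ((1 + l * y) ^ ((1:ℝ)/l) - 1)) := by
      funext y
      show Real.exp (α * (degExp l 1 y - 1)) = _
      rw [hdeg]
    have h1l : (1:ℝ)/l * (1 + l * t) ^ ((1:ℝ)/l - 1) * l = (1 + l * t) ^ ((1:ℝ)/l - 1) := by
      field_simp
    have heq : Real.exp (α * ((1 + l * t) ^ ((1:ℝ)/l) - 1))
        * (α * ((1:ℝ)/l * (1 + l * t) ^ ((1:ℝ)/l - 1) * l))
        = α * (1 + l * t) ^ ((1:ℝ)/l - 1) * Real.exp (α * ((1 + l * t) ^ ((1:ℝ)/l) - 1)) := by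
      rw [h1l]; ring
    rw [heq] at h4
    rw [hFe]
    exact h4
  set A : ℝ := (1 + l * θ) ^ ((1:ℝ)/l - 1) with hA_def
  set B : ℝ := (1 + l * θ) ^ ((1:ℝ)/l - 2) with hB_def
  set F1 : ℝ → ℝ := fun t => α * (1 + l * t) ^ ((1:ℝ)/l - 1) * F t with hF1_def
  have hF1d : ∀ t : ℝ, 0 < t →
      HasDerivAt F1 (α * (((1:ℝ)/l - 1) * (1 + l * t) ^ ((1:ℝ)/l - 2) * l) * F t
        + α * (1 + l * t) ^ ((1:ℝ)/l - 1) * (α * (1 + l * t) ^ ((1:ℝ)/l - 1) * F t)) t := by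
    intro t ht
    have h2 := (hrpow ((1:ℝ)/l - 1) t ht).const_mul α
    have h3 := h2.mul (hFd t ht)
    have he : (1:ℝ)/l - 1 - 1 = (1:ℝ)/l - 2 := by ring
    rw [he] at h3
    exact h3
  -- transfer derivatives to the series
  have key1 : ∀ t : ℝ, 0 < t → (∑' n : ℕ, d n * t ^ n) = F1 t := by
    intro t ht
    have hEq : (fun x : ℝ => ∑' n : ℕ, c n * x ^ n) =ᶠ[nhds t] F := by
      filter_upwards [isOpen_Ioi.mem_nhds (Set.mem_Ioi.mpr ht)] with y hy
      exact hgF y hy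
    have hdF : HasDerivAt F (∑' n : ℕ, d n * t ^ n) t :=
      (hgd t).congr_of_eventuallyEq hEq.symm
    rw [hdF.unique (hFd t ht), hF1_def]
  have key2 : (∑' n : ℕ, ((n:ℝ) + 1) * d (n + 1) * θ ^ n)
      = α * (((1:ℝ)/l - 1) * B * l) * F θ + α * A * (α * A * F θ) := by
    have hEq : (fun x : ℝ => ∑' n : ℕ, d n * x ^ n) =ᶠ[nhds θ] F1 := by
      filter_upwards [isOpen_Ioi.mem_nhds (Set.mem_Ioi.mpr hθ)] with y hy
      exact key1 y hy
    have hdF1 : HasDerivAt F1 (∑' n : ℕ, ((n:ℝ) + 1) * d (n + 1) * θ ^ n) θ :=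
      (hg1d θ).congr_of_eventuallyEq hEq.symm
    rw [hdF1.unique (hF1d θ hθ), hA_def, hB_def]
  have hS1 : (∑' n : ℕ, d n * θ ^ n) = α * A * F θ := by
    rw [key1 θ hθ, hF1_def]
  -- summability facts at θ
  have hs_dθ : Summable fun n : ℕ => d n * θ ^ n := summable_pow_of_abs d hdabs hθ habsθ
  have hs_c_deriv : Summable fun n : ℕ => c n * ((n:ℝ) * θ ^ (n - 1)) :=
    summable_deriv_pow c hcabs hθ habsθ
  have hs_d_deriv : Summable fun n : ℕ => d n * ((n:ℝ) * θ ^ (n - 1)) :=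
    summable_deriv_pow d hdabs hθ habsθ
  -- first moment
  have hpc : ∀ n : ℕ, p n = C * (c n * θ ^ n) := by
    intro n; rw [hp_def, hc_def]; ring
  have hf1e : (fun n : ℕ => (n:ℝ) * p n)
      = fun n : ℕ => (C * θ) * (c n * ((n:ℝ) * θ ^ (n - 1))) := by
    funext n
    rcases n with _ | n
    · simp
    · rw [hpc]
      rw [show θ ^ (n + 1) = θ ^ n * θ from pow_succ θ n]
      push_cast
      ring_nf
  have hs_m1 : Summable fun n : ℕ => (n:ℝ) * p n := by
    rw [hf1e]; exact hs_c_deriv.mul_left _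
  have hm1 : (∑' n : ℕ, (n:ℝ) * p n) = C * F θ * (θ * (α * A)) := by
    rw [hf1e, tsum_mul_left, deriv_series_shift c hcabs θ]
    have hdd : (∑' n : ℕ, ((n:ℝ) + 1) * c (n + 1) * θ ^ n) = ∑' n : ℕ, d n * θ ^ n :=
      tsum_congr fun n => by rw [hd_def]
    rw [hdd, hS1]
    ring
  -- second moment
  have hf2e : (fun n : ℕ => (n:ℝ)^2 * p n)
      = fun n : ℕ => (C * θ) * ((n:ℝ) * (c n * ((n:ℝ) * θ ^ (n - 1)))) := by
    funext n
    rcases n with _ | n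
    · simp
    · rw [hpc]
      rw [show θ ^ (n + 1) = θ ^ n * θ from pow_succ θ n]
      push_cast
      ring_nf
  have hshift2 : ∀ n : ℕ, (((n:ℕ)+1 : ℕ) : ℝ) * (c (n+1) * ((((n:ℕ)+1 : ℕ) : ℝ) * θ ^ (n + 1 - 1)))
      = θ * (d n * ((n:ℝ) * θ ^ (n - 1))) + d n * θ ^ n := by
    intro n
    rcases n with _ | n
    · simp [hd_def]
    · rw [hd_def]
      simp only [Nat.add_sub_cancel]
      rw [show θ ^ (n + 1) = θ ^ n * θ from pow_succ θ n]
      push_cast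
      ring_nf
  have hs_inner : Summable fun n : ℕ => (n:ℝ) * (c n * ((n:ℝ) * θ ^ (n - 1))) := by
    rw [← summable_nat_add_iff 1]
    refine ((hs_d_deriv.mul_left θ).add hs_dθ).congr fun n => ?_
    exact (hshift2 n).symm
  have hs_m2 : Summable fun n : ℕ => (n:ℝ)^2 * p n := by
    rw [hf2e]; exact hs_inner.mul_left _
  have hinner : (∑' n : ℕ, (n:ℝ) * (c n * ((n:ℝ) * θ ^ (n - 1))))
      = θ * (∑' n : ℕ, ((n:ℝ) + 1) * d (n + 1) * θ ^ n) + α * A * F θ := by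
    rw [Summable.tsum_eq_zero_add hs_inner]
    simp only [Nat.cast_zero, zero_mul, zero_add]
    have hterms : (∑' n : ℕ, (((n:ℕ)+1 : ℕ) : ℝ) * (c (n+1) * ((((n:ℕ)+1 : ℕ) : ℝ) * θ ^ (n + 1 - 1))))
        = ∑' n : ℕ, (θ * (d n * ((n:ℝ) * θ ^ (n - 1))) + d n * θ ^ n) := by
      exact tsum_congr fun n => hshift2 n
    rw [hterms, Summable.tsum_add (hs_d_deriv.mul_left θ) hs_dθ, tsum_mul_left,
      deriv_series_shift d hdabs θ, hS1]
  have hm2 : (∑' n : ℕ, (n:ℝ)^2 * p n)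
      = C * F θ * (θ * (θ * (α * (((1:ℝ)/l - 1) * B * l) + α * A * (α * A)) + α * A)) := by
    rw [hf2e, tsum_mul_left, hinner, key2]
    ring
  -- integrals
  have hint1 : (∫ ω, ((X ω : ℝ)) ∂P) = ∑' n : ℕ, (n:ℝ) * p n := by
    have h := integral_comp_nat_eq_tsum P X hXmeas (fun n => (n:ℝ))
      (fun n => Nat.cast_nonneg n) p hppos hXp hs_m1
    exact h
  have hint2 : (∫ ω, ((X ω : ℝ))^2 ∂P) = ∑' n : ℕ, (n:ℝ)^2 * p n := by
    have h := integral_comp_nat_eq_tsum P X hXmeas (fun n => (n:ℝ)^2)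
      (fun n => by positivity) p hppos hXp hs_m2
    exact h
  rw [hint1, hint2, hm1, hm2, hCF]
  -- final algebra
  have hAB : degExp l (1 - l) θ = A := by
    rw [degExp, hA_def]
    congr 1
    field_simp
  have hBeq : degExp l (-l) θ * A = B := by
    rw [degExp, hA_def, hB_def, ← Real.rpow_add hx0]
    congr 1
    field_simp
    ring
  have hll : ((1:ℝ)/l - 1) * l = 1 - l := by field_simp
  rw [hAB]
  linear_combination (θ^2*α*B) * hll - (θ^2*α*(1-l)) * hBeq
end

section
/- Let g(t) = E[exp(−x N_λ(t))] for a degenerate Bell process with parameters (α,θ), where x > 0. Then g satisfies the differential equation g'(t) = α(e_λ(e^{-x}θ) − e_λ(θ)) g(t) with g(0)=1, and hence g(t) = exp(αt(e_λ(e^{-x}θ) − e_λ(θ))). -/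
open Real MeasureTheory ProbabilityTheory Filter Asymptotics

open Topology

set_option maxHeartbeats 1000000

set_option linter.unusedSectionVars false

lemma dFall_sum_eq (l : ℝ) (m : ℕ) (hml : (m : ℝ) * l = 1) (u : ℝ) :
    ∑ k ∈ Finset.range (m + 1), dFall l 1 k * u ^ k / (k.factorial : ℝ) = (1 + l * u) ^ m := by
  have key : ∀ k ∈ Finset.range (m + 1),
      dFall l 1 k * u ^ k / (k.factorial : ℝ) = (l * u) ^ k * 1 ^ (m - k) * (m.choose k : ℝ) := by
    intro k hk
    rw [Finset.mem_range, Nat.lt_succ_iff] at hk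
    have hd : dFall l 1 k = (m.descFactorial k : ℝ) * l ^ k := by
      unfold dFall
      have : ∀ i ∈ Finset.range k, (1 : ℝ) - i * l = ((m - i : ℕ) : ℝ) * l := by
        intro i hi
        rw [Finset.mem_range] at hi
        rw [Nat.cast_sub (le_trans (Nat.le_of_lt hi) hk)]
        rw [sub_mul, ← hml]
      rw [Finset.prod_congr rfl this, Finset.prod_mul_distrib]
      rw [Finset.prod_const, Finset.card_range]
      congr 1
      rw [Nat.descFactorial_eq_prod_range, Nat.cast_prod]
    rw [hd, Nat.descFactorial_eq_factorial_mul_choose]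
    have hfac : ((k.factorial : ℝ)) ≠ 0 := Nat.cast_ne_zero.mpr k.factorial_ne_zero
    push_cast
    field_simp
    ring
  rw [Finset.sum_congr rfl key, ← add_pow]
  ring_nf


set_option linter.unusedSectionVars false

section Infra
variable {Ω : Type*} [MeasurableSpace Ω] (P : Measure Ω) [IsProbabilityMeasure P]

lemma integrable_of_le_one {f : Ω → ℝ} (hf : Measurable f) (h0 : ∀ ω, 0 ≤ f ω)
    (h1 : ∀ ω, f ω ≤ 1) : Integrable f P := by
  refine (integrable_const (1:ℝ)).mono' hf.aestronglyMeasurable ?_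
  filter_upwards with ω
  rw [Real.norm_eq_abs, abs_of_nonneg (h0 ω)]
  exact h1 ω

lemma integral_comp_nat_eq {Y Z : Ω → ℕ} (hY : Measurable Y) (hZ : Measurable Z)
    (h : P.map Y = P.map Z) (f : ℕ → ℝ) :
    ∫ ω, f (Y ω) ∂P = ∫ ω, f (Z ω) ∂P := by
  have hf : Measurable f := measurable_from_nat
  rw [← integral_map hY.aemeasurable hf.aestronglyMeasurable, h,
    integral_map hZ.aemeasurable hf.aestronglyMeasurable]

omit [IsProbabilityMeasure P] in
lemma map_eq_of_singleton {Y Z : Ω → ℕ} (hY : Measurable Y) (hZ : Measurable Z)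
    (h : ∀ k, P {ω | Y ω = k} = P {ω | Z ω = k}) : P.map Y = P.map Z := by
  apply MeasureTheory.Measure.ext_of_singleton
  intro k
  rw [Measure.map_apply hY (measurableSet_singleton k),
      Measure.map_apply hZ (measurableSet_singleton k)]
  exact h k



lemma partition_bound (Y : Ω → ℕ) (hY : Measurable Y) (x : ℝ) (hx : 0 ≤ x) (m : ℕ) :
    0 ≤ 1 - (∫ ω, Real.exp (-(x * (Y ω : ℝ))) ∂P)
        - ∑ k ∈ Finset.range (m+1), (1 - Real.exp (-(x*(k:ℝ)))) * (P {ω | Y ω = k}).toReal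
    ∧ 1 - (∫ ω, Real.exp (-(x * (Y ω : ℝ))) ∂P)
        - ∑ k ∈ Finset.range (m+1), (1 - Real.exp (-(x*(k:ℝ)))) * (P {ω | Y ω = k}).toReal
      ≤ (P {ω | m+1 ≤ Y ω}).toReal := by
  set F : Ω → ℝ := fun ω => 1 - Real.exp (-(x * (Y ω : ℝ))) with hF
  have hfm : Measurable (fun ω => Real.exp (-(x * (Y ω : ℝ)))) :=
    (measurable_from_nat (f := fun k : ℕ => Real.exp (-(x * (k : ℝ))))).comp hY
  have hFmeas : Measurable F := measurable_const.sub hfm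
  have hF0 : ∀ ω, 0 ≤ F ω := by
    intro ω
    have : Real.exp (-(x * (Y ω : ℝ))) ≤ 1 := by
      rw [← Real.exp_zero]
      apply Real.exp_le_exp.mpr
      have : (0:ℝ) ≤ x * (Y ω : ℝ) := mul_nonneg hx (Nat.cast_nonneg _)
      linarith
    simp only [hF]; linarith
  have hF1 : ∀ ω, F ω ≤ 1 := by
    intro ω
    have := Real.exp_pos (-(x * (Y ω : ℝ)))
    simp only [hF]; linarith
  have hFint : Integrable F P := integrable_of_le_one P hFmeas hF0 hF1
  -- ∫ F = 1 - g
  have hintF : ∫ ω, F ω ∂P = 1 - ∫ ω, Real.exp (-(x * (Y ω : ℝ))) ∂P := by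
    have hint : Integrable (fun ω => Real.exp (-(x * (Y ω : ℝ)))) P :=
      integrable_of_le_one P hfm (fun ω => (Real.exp_pos _).le)
        (fun ω => by
          rw [← Real.exp_zero]
          apply Real.exp_le_exp.mpr
          have : (0:ℝ) ≤ x * (Y ω : ℝ) := mul_nonneg hx (Nat.cast_nonneg _)
          linarith)
    rw [hF]
    rw [integral_sub (integrable_const 1) hint, integral_const]
    simp
  -- decompose over A = {Y < m+1}
  set A : Set Ω := {ω | Y ω < m + 1} with hA
  have hAmeas : MeasurableSet A := hY (measurableSet_lt measurable_id measurable_const)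
  have hAc : Aᶜ = {ω | m + 1 ≤ Y ω} := by
    ext ω; simp [hA, Set.mem_compl_iff, not_lt]
  have hsplit : ∫ ω, F ω ∂P = (∫ ω in A, F ω ∂P) + ∫ ω in Aᶜ, F ω ∂P :=
    (integral_add_compl hAmeas hFint).symm
  -- ∫_A F = sum
  have hAunion : A = ⋃ k ∈ Finset.range (m+1), {ω | Y ω = k} := by
    ext ω
    simp only [hA, Set.mem_setOf_eq, Set.mem_iUnion, Finset.mem_range]
    constructor
    · intro h; exact ⟨Y ω, h, rfl⟩
    · rintro ⟨k, hk, hω⟩; omega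
  have hsumA : ∫ ω in A, F ω ∂P
      = ∑ k ∈ Finset.range (m+1), (1 - Real.exp (-(x*(k:ℝ)))) * (P {ω | Y ω = k}).toReal := by
    rw [hAunion, integral_biUnion_finset]
    · apply Finset.sum_congr rfl
      intro k _
      have h1 : ∀ ω ∈ {ω | Y ω = k}, F ω = 1 - Real.exp (-(x*(k:ℝ))) := by
        intro ω hω
        simp only [Set.mem_setOf_eq] at hω
        simp [hF, hω]
      have hms : MeasurableSet {ω | Y ω = k} := hY (measurableSet_singleton k)
      rw [setIntegral_congr_fun hms h1, setIntegral_const]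
      simp [mul_comm]; left; rfl
    · exact fun k _ => show MeasurableSet {ω | Y ω = k} from hY (measurableSet_singleton k)
    · intro i _ j _ hij
      apply Set.disjoint_left.mpr
      intro ω hi hj
      simp only [Set.mem_setOf_eq] at hi hj
      exact hij (hi ▸ hj ▸ rfl)
    · exact fun k _ => hFint.integrableOn
  have h0c : 0 ≤ ∫ ω in Aᶜ, F ω ∂P :=
    setIntegral_nonneg hAmeas.compl (fun ω _ => hF0 ω)
  have h1c : ∫ ω in Aᶜ, F ω ∂P ≤ (P {ω | m+1 ≤ Y ω}).toReal := by
    calc ∫ ω in Aᶜ, F ω ∂P ≤ ∫ _ω in Aᶜ, (1:ℝ) ∂P := by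
          apply setIntegral_mono_on hFint.integrableOn (integrable_const 1).integrableOn
            hAmeas.compl
          exact fun ω _ => hF1 ω
      _ = (P Aᶜ).toReal := by rw [setIntegral_const]; simp; rfl
      _ = (P {ω | m+1 ≤ Y ω}).toReal := by rw [hAc]
  constructor
  · have := hsplit ▸ hintF
    linarith [hsumA, h0c, hsplit, hintF]
  · linarith [hsumA, h1c, hsplit, hintF]

lemma recursion_pow (N : ℝ → Ω → ℕ)
    (hNmeas : ∀ t : ℝ, Measurable (N t))
    (hN0 : ∀ ω, N 0 ω = 0)
    (hmono : ∀ ω, ∀ ⦃s t : ℝ⦄, s ≤ t → N s ω ≤ N t ω)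
    (hmapeq : ∀ t s : ℝ, 0 ≤ t → 0 ≤ s →
      P.map (fun ω => N (t+s) ω - N t ω) = P.map (N s))
    (hindep : ∀ t₁ t₂ t₃ : ℝ, 0 ≤ t₁ → t₁ ≤ t₂ → t₂ ≤ t₃ →
      IndepFun (fun ω => N t₂ ω - N t₁ ω) (fun ω => N t₃ ω - N t₂ ω) P)
    (K : ℕ) (s : ℝ) (hs : 0 ≤ s) :
    ∀ n : ℕ, P {ω | N (n*s) ω < K} ≤ (P {ω | N s ω < K})^n := by
  intro n
  induction n with
  | zero => simpa using prob_le_one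
  | succ n ih =>
    have hns : (0:ℝ) ≤ (n:ℕ)*s := by positivity
    have heq : (((n:ℕ)+1 : ℕ):ℝ)*s = (n:ℕ)*s + s := by push_cast; ring
    set inc : Ω → ℕ := fun ω => N ((n:ℕ)*s + s) ω - N ((n:ℕ)*s) ω with hinc
    have hincm : Measurable inc := (hNmeas _).sub (hNmeas _)
    have hI : IndepFun (N ((n:ℕ)*s)) inc P := by
      have := hindep 0 ((n:ℕ)*s) ((n:ℕ)*s + s) le_rfl hns (by linarith)
      have hfe : (fun ω => N ((n:ℕ)*s) ω - N 0 ω) = N ((n:ℕ)*s) := by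
        funext ω; rw [hN0 ω]; rfl
      rwa [hfe] at this
    have hincl : {ω | N ((((n:ℕ)+1 : ℕ):ℝ)*s) ω < K}
        ⊆ (N ((n:ℕ)*s) ⁻¹' (Set.Iio K)) ∩ (inc ⁻¹' (Set.Iio K)) := by
      intro ω hω
      simp only [Set.mem_setOf_eq, heq] at hω
      constructor
      · exact lt_of_le_of_lt (hmono ω (by linarith : (n:ℕ)*s ≤ (n:ℕ)*s + s)) hω
      · exact lt_of_le_of_lt (Nat.sub_le _ _) hω
    have hmul := hI.measure_inter_preimage_eq_mul (Set.Iio K) (Set.Iio K)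
      measurableSet_Iio measurableSet_Iio
    have hmap : P (inc ⁻¹' (Set.Iio K)) = P {ω | N s ω < K} := by
      rw [← Measure.map_apply hincm measurableSet_Iio, hmapeq _ _ hns hs,
        Measure.map_apply (hNmeas s) measurableSet_Iio]
      rfl
    calc P {ω | N ((((n:ℕ)+1 : ℕ):ℝ)*s) ω < K}
        ≤ P ((N ((n:ℕ)*s) ⁻¹' (Set.Iio K)) ∩ (inc ⁻¹' (Set.Iio K))) := measure_mono hincl
      _ = P (N ((n:ℕ)*s) ⁻¹' (Set.Iio K)) * P (inc ⁻¹' (Set.Iio K)) := hmul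
      _ = P {ω | N ((n:ℕ)*s) ω < K} * P {ω | N s ω < K} := by rw [hmap]; rfl
      _ ≤ (P {ω | N s ω < K})^n * P {ω | N s ω < K} :=
          mul_le_mul_left ih _
      _ = (P {ω | N s ω < K})^(n+1) := by rw [pow_succ]

lemma tail_littleO (N : ℝ → Ω → ℕ)
    (hNmeas : ∀ t : ℝ, Measurable (N t))
    (hmono : ∀ ω, ∀ ⦃s t : ℝ⦄, s ≤ t → N s ω ≤ N t ω)
    (hrec : ∀ (K : ℕ) (s : ℝ), 0 ≤ s →
      ∀ n : ℕ, P {ω | N (n*s) ω < K} ≤ (P {ω | N s ω < K})^n)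
    (m : ℕ)
    (hsmall : ∀ k : ℕ, m+1 ≤ k →
      (fun s => (P {ω | N s ω = k}).toReal) =o[nhdsWithin 0 (Set.Ioi 0)] (fun s : ℝ => s)) :
    (fun s => (P {ω | m+1 ≤ N s ω}).toReal) =o[nhdsWithin 0 (Set.Ioi 0)] (fun s : ℝ => s) := by
  rw [isLittleO_iff]
  by_contra hcon
  push_neg at hcon
  obtain ⟨ε, hε, hne⟩ := hcon
  set δ : ℝ := 1 - Real.exp (-(ε/4)) with hδ
  have hδpos : 0 < δ := by
    have h : Real.exp (-(ε/4)) < 1 := Real.exp_lt_one_iff.mpr (by linarith)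
    rw [hδ]; linarith
  -- tail of N 1 tends to 0
  have htail : Tendsto (fun K : ℕ => (P {ω | K ≤ N 1 ω}).toReal) atTop (𝓝 0) := by
    have h1 : Tendsto (fun K : ℕ => P {ω | K ≤ N 1 ω}) atTop (𝓝 (P (⋂ K : ℕ, {ω | K ≤ N 1 ω}))) := by
      apply tendsto_measure_iInter_atTop
      · exact fun K => (show MeasurableSet {ω | K ≤ N 1 ω} from (hNmeas 1) measurableSet_Ici).nullMeasurableSet
      · intro i j hij
        exact fun ω hω => le_trans hij hω
      · exact ⟨0, measure_ne_top _ _⟩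
    have h2 : (⋂ K : ℕ, {ω | K ≤ N 1 ω}) = ∅ := by
      ext ω
      simp only [Set.mem_iInter, Set.mem_setOf_eq, Set.mem_empty_iff_false, iff_false, not_forall]
      exact ⟨N 1 ω + 1, by omega⟩
    rw [h2, measure_empty] at h1
    exact (ENNReal.tendsto_toReal ENNReal.zero_ne_top).comp h1
  obtain ⟨K, hKm, hKlt⟩ : ∃ K : ℕ, m + 1 ≤ K ∧ (P {ω | K ≤ N 1 ω}).toReal < δ := by
    have h3 := (htail.eventually_lt_const hδpos).and (eventually_ge_atTop (m+1))
    obtain ⟨K, h1, h2⟩ := h3.exists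
    exact ⟨K, h2, h1⟩
  -- finite sum of small probabilities
  have hfin : (fun s => ∑ k ∈ Finset.Ico (m+1) K, (P {ω | N s ω = k}).toReal)
      =o[nhdsWithin 0 (Set.Ioi 0)] (fun s : ℝ => s) := by
    apply Asymptotics.IsLittleO.fun_sum
    intro k hk
    exact hsmall k (Finset.mem_Ico.mp hk).1
  have hev : ∀ᶠ s in nhdsWithin 0 (Set.Ioi 0),
      (∑ k ∈ Finset.Ico (m+1) K, (P {ω | N s ω = k}).toReal ≤ (ε/2) * s)
      ∧ 0 < s ∧ s < 1/2 := by
    have e1 := hfin.def (by positivity : (0:ℝ) < ε/2)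
    have e2 : ∀ᶠ s in nhdsWithin 0 (Set.Ioi 0), s ∈ Set.Ioo (0:ℝ) (1/2) := by
      apply Filter.eventually_of_mem (Ioo_mem_nhdsGT_of_mem (by norm_num : (0:ℝ) ∈ Set.Ico (0:ℝ) (1/2)))
      exact fun s hs => hs
    filter_upwards [e1, e2] with s h1 h2
    refine ⟨?_, h2.1, h2.2⟩
    rw [Real.norm_eq_abs, Real.norm_eq_abs, abs_of_pos h2.1] at h1
    calc ∑ k ∈ Finset.Ico (m+1) K, (P {ω | N s ω = k}).toReal
        ≤ |∑ k ∈ Finset.Ico (m+1) K, (P {ω | N s ω = k}).toReal| := le_abs_self _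
      _ ≤ ε/2 * s := h1
  obtain ⟨s, hU, hsum, hs0, hs12⟩ : ∃ s, ε * s < (P {ω | m+1 ≤ N s ω}).toReal
      ∧ (∑ k ∈ Finset.Ico (m+1) K, (P {ω | N s ω = k}).toReal ≤ (ε/2) * s)
      ∧ 0 < s ∧ s < 1/2 := by
    obtain ⟨s, h1, h2, h3, h4⟩ := (hne.and_eventually hev).exists
    refine ⟨s, ?_, h2, h3, h4⟩
    rw [Real.norm_eq_abs, Real.norm_eq_abs, abs_of_pos h3,
      abs_of_nonneg ENNReal.toReal_nonneg] at h1
    exact h1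
  -- lower bound on the K-tail at s
  have hUK : (ε/2) * s ≤ (P {ω | K ≤ N s ω}).toReal := by
    have hincl : {ω | m+1 ≤ N s ω}
        ⊆ {ω | K ≤ N s ω} ∪ ⋃ k ∈ Finset.Ico (m+1) K, {ω | N s ω = k} := by
      intro ω hω
      simp only [Set.mem_setOf_eq] at hω
      by_cases hK : K ≤ N s ω
      · exact Or.inl hK
      · refine Or.inr ?_
        simp only [Set.mem_iUnion, Finset.mem_Ico, Set.mem_setOf_eq]
        exact ⟨N s ω, ⟨hω, not_le.mp hK⟩, rfl⟩
    have h1 : P {ω | m+1 ≤ N s ω}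
        ≤ P {ω | K ≤ N s ω} + ∑ k ∈ Finset.Ico (m+1) K, P {ω | N s ω = k} := by
      refine le_trans (measure_mono hincl) ?_
      refine le_trans (measure_union_le _ _) ?_
      exact add_le_add (le_refl _) (measure_biUnion_finset_le _ _)
    have h2 : (P {ω | m+1 ≤ N s ω}).toReal
        ≤ (P {ω | K ≤ N s ω}).toReal + ∑ k ∈ Finset.Ico (m+1) K, (P {ω | N s ω = k}).toReal := by
      have hne1 : P {ω | K ≤ N s ω} + ∑ k ∈ Finset.Ico (m+1) K, P {ω | N s ω = k} ≠ ⊤ :=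
        ENNReal.add_ne_top.mpr ⟨measure_ne_top _ _,
          (ENNReal.sum_lt_top.mpr (fun k _ => measure_lt_top _ _)).ne⟩
      calc (P {ω | m+1 ≤ N s ω}).toReal
          ≤ (P {ω | K ≤ N s ω} + ∑ k ∈ Finset.Ico (m+1) K, P {ω | N s ω = k}).toReal :=
            ENNReal.toReal_mono hne1 h1
        _ = (P {ω | K ≤ N s ω}).toReal + (∑ k ∈ Finset.Ico (m+1) K, P {ω | N s ω = k}).toReal := by
            rw [ENNReal.toReal_add (measure_ne_top _ _)
              (ENNReal.sum_lt_top.mpr (fun k _ => measure_lt_top _ _)).ne]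
        _ = (P {ω | K ≤ N s ω}).toReal + ∑ k ∈ Finset.Ico (m+1) K, (P {ω | N s ω = k}).toReal := by
            rw [ENNReal.toReal_sum (fun k _ => measure_ne_top _ _)]
    nlinarith [hU, hsum]
  set n : ℕ := ⌊1/s⌋₊ with hn
  have hns1 : (n:ℝ)*s ≤ 1 := by
    have := Nat.floor_le (by positivity : (0:ℝ) ≤ 1/s)
    calc (n:ℝ)*s ≤ (1/s)*s := by
          apply mul_le_mul_of_nonneg_right _ hs0.le
          rw [hn]; exact this
      _ = 1 := by field_simp
  have hns2 : (1:ℝ)/2 < (n:ℝ)*s := by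
    have h1 : 1/s - 1 < (n:ℝ) := Nat.sub_one_lt_floor (1/s)
    have h2 : (1/s - 1)*s < (n:ℝ)*s := by
      apply mul_lt_mul_of_pos_right h1 hs0
    have h3 : (1/s - 1)*s = 1 - s := by field_simp
    linarith
  -- complements in toReal
  have compl_eq : ∀ r : ℝ, (P {ω | N r ω < K}).toReal = 1 - (P {ω | K ≤ N r ω}).toReal := by
    intro r
    have hms : MeasurableSet {ω | K ≤ N r ω} := (hNmeas r) measurableSet_Ici
    have hAc : {ω | K ≤ N r ω}ᶜ = {ω | N r ω < K} := by
      ext ω; simp [not_le]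
    have h1 : P {ω | K ≤ N r ω} + P {ω | N r ω < K} = 1 := by
      rw [← hAc, measure_add_measure_compl hms, measure_univ]
    have h2 := congrArg ENNReal.toReal h1
    rw [ENNReal.toReal_add (measure_ne_top _ _) (measure_ne_top _ _), ENNReal.toReal_one] at h2
    linarith
  -- recursion bound
  have hb : (P {ω | N ((n:ℝ)*s) ω < K}).toReal ≤ ((P {ω | N s ω < K}).toReal)^n := by
    have := hrec K s hs0.le n
    calc (P {ω | N ((n:ℝ)*s) ω < K}).toReal
        ≤ ((P {ω | N s ω < K})^n).toReal :=
          ENNReal.toReal_mono (ENNReal.pow_ne_top (measure_ne_top _ _)) this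
      _ = ((P {ω | N s ω < K}).toReal)^n := ENNReal.toReal_pow _ _
  -- monotonicity to time 1
  have hmon1 : (P {ω | K ≤ N ((n:ℝ)*s) ω}).toReal ≤ (P {ω | K ≤ N 1 ω}).toReal := by
    apply ENNReal.toReal_mono (measure_ne_top _ _)
    apply measure_mono
    intro ω hω
    exact le_trans hω (hmono ω hns1)
  -- exponential bound
  set UK : ℝ := (P {ω | K ≤ N s ω}).toReal with hUKdef
  have hUK1 : UK ≤ 1 := by
    rw [hUKdef]
    have h := ENNReal.toReal_mono (by simp : (1:ENNReal) ≠ ⊤) (prob_le_one (μ := P) (s := {ω | K ≤ N s ω}))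
    simpa using h
  have ha0 : (0:ℝ) ≤ 1 - UK := by linarith
  have hpow : ((P {ω | N s ω < K}).toReal)^n ≤ Real.exp (-(ε/4)) := by
    rw [compl_eq s]
    have h1 : 1 - UK ≤ Real.exp (-UK) := by
      have := Real.add_one_le_exp (-UK)
      linarith
    have h2 : (1 - UK)^n ≤ (Real.exp (-UK))^n := pow_le_pow_left₀ ha0 h1 n
    have h3 : (Real.exp (-UK))^n = Real.exp ((n:ℝ) * (-UK)) := (Real.exp_nat_mul _ n).symm
    have h4 : (n:ℝ) * (-UK) ≤ -(ε/4) := by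
      have h5 : (ε/2) * ((n:ℝ)*s) ≤ (n:ℝ) * UK := by
        have : (n:ℝ) * ((ε/2)*s) ≤ (n:ℝ) * UK :=
          mul_le_mul_of_nonneg_left hUK (Nat.cast_nonneg n)
        linarith [this]
      nlinarith [hns2, hε]
    calc (1 - UK)^n ≤ (Real.exp (-UK))^n := h2
      _ = Real.exp ((n:ℝ) * (-UK)) := h3
      _ ≤ Real.exp (-(ε/4)) := Real.exp_le_exp.mpr h4
  -- contradiction
  have hfinal : δ ≤ (P {ω | K ≤ N 1 ω}).toReal := by
    have h1 := compl_eq ((n:ℝ)*s)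
    have h2 : 1 - Real.exp (-(ε/4)) ≤ (P {ω | K ≤ N ((n:ℝ)*s) ω}).toReal := by
      have := hb.trans hpow
      linarith
    exact le_trans (le_of_eq hδ) (le_trans h2 hmon1)
  linarith

lemma g_mult (N : ℝ → Ω → ℕ)
    (hNmeas : ∀ t : ℝ, Measurable (N t))
    (hN0 : ∀ ω, N 0 ω = 0)
    (hmono : ∀ ω, ∀ ⦃s t : ℝ⦄, s ≤ t → N s ω ≤ N t ω)
    (hmapeq : ∀ t s : ℝ, 0 ≤ t → 0 ≤ s →
      P.map (fun ω => N (t+s) ω - N t ω) = P.map (N s))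
    (hindep : ∀ t₁ t₂ t₃ : ℝ, 0 ≤ t₁ → t₁ ≤ t₂ → t₂ ≤ t₃ →
      IndepFun (fun ω => N t₂ ω - N t₁ ω) (fun ω => N t₃ ω - N t₂ ω) P)
    (x : ℝ) (hx : 0 ≤ x) (t s : ℝ) (ht : 0 ≤ t) (hs : 0 ≤ s) :
    ∫ ω, Real.exp (-(x * (N (t+s) ω : ℝ))) ∂P
      = (∫ ω, Real.exp (-(x * (N t ω : ℝ))) ∂P) * ∫ ω, Real.exp (-(x * (N s ω : ℝ))) ∂P := by
  set f : ℕ → ℝ := fun k => Real.exp (-(x * (k:ℝ))) with hf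
  have hfm : Measurable f := measurable_from_nat
  have hf0 : ∀ k, 0 ≤ f k := fun k => (Real.exp_pos _).le
  have hf1 : ∀ k, f k ≤ 1 := by
    intro k
    have h0 : (0:ℝ) ≤ x * (k:ℝ) := mul_nonneg hx (Nat.cast_nonneg _)
    calc f k = Real.exp (-(x*(k:ℝ))) := rfl
      _ ≤ Real.exp 0 := Real.exp_le_exp.mpr (by linarith)
      _ = 1 := Real.exp_zero
  set inc : Ω → ℕ := fun ω => N (t+s) ω - N t ω with hinc
  have hincm : Measurable inc := (hNmeas _).sub (hNmeas _)
  have hpt : (fun ω => Real.exp (-(x * (N (t+s) ω : ℝ))))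
      = fun ω => f (N t ω) * f (inc ω) := by
    funext ω
    have hle : N t ω ≤ N (t+s) ω := hmono ω (by linarith)
    rw [hf]
    simp only [hinc]
    rw [← Real.exp_add]
    congr 1
    have : ((N (t+s) ω - N t ω : ℕ) : ℝ) = (N (t+s) ω : ℝ) - (N t ω : ℝ) := by
      exact Nat.cast_sub hle
    rw [this]
    ring
  have hI : IndepFun (N t) inc P := by
    have h := hindep 0 t (t+s) le_rfl ht (by linarith)
    have hfe : (fun ω => N t ω - N 0 ω) = N t := by
      funext ω; rw [hN0 ω]; rfl
    rwa [hfe] at h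
  have hIc : IndepFun (fun ω => f (N t ω)) (fun ω => f (inc ω)) P :=
    hI.comp hfm hfm
  have hint1 : Integrable (fun ω => f (N t ω)) P :=
    integrable_of_le_one P (hfm.comp (hNmeas t)) (fun ω => hf0 _) (fun ω => hf1 _)
  have hint2 : Integrable (fun ω => f (inc ω)) P :=
    integrable_of_le_one P (hfm.comp hincm) (fun ω => hf0 _) (fun ω => hf1 _)
  rw [hpt]
  have hmulint := hIc.integral_fun_mul_eq_mul_integral hint1.aestronglyMeasurable hint2.aestronglyMeasurable
  calc ∫ ω, f (N t ω) * f (inc ω) ∂P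
      = (∫ ω, f (N t ω) ∂P) * ∫ ω, f (inc ω) ∂P := hmulint
    _ = (∫ ω, Real.exp (-(x * (N t ω : ℝ))) ∂P) * ∫ ω, Real.exp (-(x * (N s ω : ℝ))) ∂P := by
        congr 1
        rw [← integral_map hincm.aemeasurable hfm.aestronglyMeasurable, hmapeq t s ht hs,
          integral_map (hNmeas s).aemeasurable hfm.aestronglyMeasurable]

lemma exp_of_mult (g : ℝ → ℝ) (c : ℝ)
    (hg0 : g 0 = 1)
    (hmul : ∀ t s : ℝ, 0 ≤ t → 0 ≤ s → g (t+s) = g t * g s)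
    (hlin : ∀ ε : ℝ, 0 < ε → ∀ᶠ s in nhdsWithin 0 (Set.Ioi 0), |g s - 1 - c*s| ≤ ε * s) :
    ∀ t : ℝ, 0 ≤ t → g t = Real.exp (c*t) := by
  have gpow : ∀ (n : ℕ) (s : ℝ), 0 ≤ s → g ((n:ℝ)*s) = (g s)^n := by
    intro n
    induction n with
    | zero => intro s _; simpa using hg0
    | succ n ih =>
      intro s hs
      have : ((n+1:ℕ):ℝ)*s = (n:ℝ)*s + s := by push_cast; ring
      rw [this, hmul _ _ (by positivity) hs, ih s hs, pow_succ]
  intro t ht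
  rcases eq_or_lt_of_le ht with h0 | ht
  · rw [← h0]; simpa using hg0
  -- key bounds
  have key : ∀ ε : ℝ, 0 < ε → Real.exp ((c-ε)*t) ≤ g t ∧ g t ≤ Real.exp ((c+ε)*t) := by
    intro ε hε
    have htseq : Tendsto (fun n : ℕ => t/(n:ℝ)) atTop (nhdsWithin 0 (Set.Ioi 0)) := by
      rw [tendsto_nhdsWithin_iff]
      constructor
      · exact tendsto_const_div_atTop_nhds_zero_nat t
      · filter_upwards [eventually_ge_atTop 1] with n hn
        have : (0:ℝ) < n := by exact_mod_cast hn
        exact Set.mem_Ioi.mpr (by positivity)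
    have hev1 : ∀ᶠ n : ℕ in atTop, |g (t/n) - 1 - c*(t/n)| ≤ ε * (t/n) :=
      htseq.eventually (hlin ε hε)
    have hev2 : ∀ᶠ n : ℕ in atTop, (0:ℝ) ≤ 1 + (c-ε)*(t/n) := by
      have h := (tendsto_const_div_atTop_nhds_zero_nat t).const_mul (c-ε)
      rw [mul_zero] at h
      filter_upwards [h.eventually (eventually_ge_nhds (by norm_num : (-1:ℝ) < 0))]
        with n hn
      linarith
    have hev3 : ∀ᶠ n : ℕ in atTop, 1 ≤ n := eventually_ge_atTop 1
    have hlb : ∀ᶠ n : ℕ in atTop, (1 + ((c-ε)*t)/n)^n ≤ g t := by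
      filter_upwards [hev1, hev2, hev3] with n h1 h2 h3
      have hn0 : (0:ℝ) < n := by exact_mod_cast h3
      have hgt : g t = (g (t/n))^n := by
        have heqt : (n:ℝ)*(t/n) = t := by field_simp
        rw [← gpow n (t/n) (by positivity), heqt]
      have hlow : 1 + (c-ε)*(t/n) ≤ g (t/n) := by
        have habs := abs_le.mp h1
        have htn : 0 < t/n := by positivity
        nlinarith [habs.1]
      rw [hgt]
      have : (1 + ((c-ε)*t)/n) = 1 + (c-ε)*(t/n) := by ring
      rw [this]
      exact pow_le_pow_left₀ h2 hlow n
    have hub : ∀ᶠ n : ℕ in atTop, g t ≤ (1 + ((c+ε)*t)/n)^n := by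
      filter_upwards [hev1, hev2, hev3] with n h1 h2 h3
      have hn0 : (0:ℝ) < n := by exact_mod_cast h3
      have hgt : g t = (g (t/n))^n := by
        have heqt : (n:ℝ)*(t/n) = t := by field_simp
        rw [← gpow n (t/n) (by positivity), heqt]
      have habs := abs_le.mp h1
      have htn : 0 < t/n := by positivity
      have hup : g (t/n) ≤ 1 + (c+ε)*(t/n) := by nlinarith [habs.2]
      have hglow : 0 ≤ g (t/n) := by nlinarith [habs.1, h2]
      rw [hgt]
      have heq2 : (1 + ((c+ε)*t)/n) = 1 + (c+ε)*(t/n) := by ring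
      rw [heq2]
      exact pow_le_pow_left₀ hglow hup n
    constructor
    · exact le_of_tendsto (Real.tendsto_one_add_div_pow_exp ((c-ε)*t)) hlb
    · exact ge_of_tendsto (Real.tendsto_one_add_div_pow_exp ((c+ε)*t)) hub
  have hgpos : 0 < g t := lt_of_lt_of_le (Real.exp_pos _) (key 1 one_pos).1
  have hlog : Real.log (g t) = c*t := by
    have habs : ∀ ε : ℝ, 0 < ε → |Real.log (g t) - c*t| ≤ ε := by
      intro ε hε
      obtain ⟨h1, h2⟩ := key (ε/t) (by positivity)
      have l1 : (c-ε/t)*t ≤ Real.log (g t) := by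
        rw [← Real.log_exp ((c-ε/t)*t)]
        exact Real.log_le_log (Real.exp_pos _) h1
      have l2 : Real.log (g t) ≤ (c+ε/t)*t := by
        rw [← Real.log_exp ((c+ε/t)*t)]
        exact Real.log_le_log hgpos h2
      have ht' : t ≠ 0 := ne_of_gt ht
      rw [abs_le]
      constructor
      · have heq3 : (c-ε/t)*t = c*t - ε := by
          rw [sub_mul, div_mul_cancel₀ _ ht']
        rw [heq3] at l1
        linarith
      · have heq3 : (c+ε/t)*t = c*t + ε := by
          rw [add_mul, div_mul_cancel₀ _ ht']
        rw [heq3] at l2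
        linarith
    by_contra hne
    have h0 : 0 < |Real.log (g t) - c*t| := abs_pos.mpr (sub_ne_zero.mpr hne)
    have := habs (|Real.log (g t) - c*t|/2) (by positivity)
    linarith
  rw [← hlog, Real.exp_log hgpos]

end Infra

theorem degenerate_bell_process_laplace_functional (l α θ : ℝ) (hl : l ∈ Set.Ioc (0 : ℝ) 1) (hα : 0 < α) (hθ : 0 < θ)
    {Ω : Type*} [MeasurableSpace Ω] (P : Measure Ω) [IsProbabilityMeasure P]
    (N : ℝ → Ω → ℕ)
    (hNmeas : ∀ t : ℝ, Measurable (N t))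
    (hN0 : ∀ ω, N 0 ω = 0)
    (hmono : ∀ ω, ∀ ⦃s t : ℝ⦄, s ≤ t → N s ω ≤ N t ω)
    (hstat : ∀ t s : ℝ, 0 ≤ t → 0 ≤ s → ∀ k : ℕ,
      P {ω | N (t + s) ω - N t ω = k} = P {ω | N s ω = k})
    (hindep : ∀ t₁ t₂ t₃ : ℝ, 0 ≤ t₁ → t₁ ≤ t₂ → t₂ ≤ t₃ →
      IndepFun (fun ω => N t₂ ω - N t₁ ω) (fun ω => N t₃ ω - N t₂ ω) P)
    (hrate : ∀ k : ℕ, 1 ≤ k → ∀ t : ℝ, 0 ≤ t →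
      (fun s => (P {ω | N (t + s) ω - N t ω = k}).toReal
          - α * s * dFall l 1 k * θ ^ k / (k.factorial : ℝ))
        =o[nhdsWithin 0 (Set.Ioi 0)] (fun s : ℝ => s))
    (x : ℝ) (hx : 0 < x) :
    (∀ t ∈ Set.Ici (0 : ℝ),
      HasDerivWithinAt (fun u => ∫ ω, Real.exp (-(x * (N u ω : ℝ))) ∂P)
        (α * (degExp l 1 (Real.exp (-x) * θ) - degExp l 1 θ) *
          ∫ ω, Real.exp (-(x * (N t ω : ℝ))) ∂P) (Set.Ici 0) t) ∧
    (∫ ω, Real.exp (-(x * (N 0 ω : ℝ))) ∂P) = 1 ∧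
    (∀ t : ℝ, 0 ≤ t →
      (∫ ω, Real.exp (-(x * (N t ω : ℝ))) ∂P) =
        Real.exp (α * t * (degExp l 1 (Real.exp (-x) * θ) - degExp l 1 θ))) := by
  have hl0 : 0 < l := hl.1
  -- simplified rate at t = 0
  have hsets : ∀ (k : ℕ) (s : ℝ), {ω | N (0 + s) ω - N 0 ω = k} = {ω | N s ω = k} := by
    intro k s
    ext ω
    simp [hN0, zero_add]
  have hrate0 : ∀ k : ℕ, 1 ≤ k →
      (fun s => (P {ω | N s ω = k}).toReal - α * s * dFall l 1 k * θ ^ k / (k.factorial : ℝ))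
        =o[nhdsWithin 0 (Set.Ioi 0)] (fun s : ℝ => s) := by
    intro k hk
    have h := hrate k hk 0 le_rfl
    simpa only [hsets] using h
  by_cases hcase : ∀ k : ℕ, 0 ≤ dFall l 1 k
  swap
  · -- contradictory case: some rate coefficient is negative
    exfalso
    push_neg at hcase
    obtain ⟨k, hk⟩ := hcase
    have hk1 : 1 ≤ k := by
      by_contra h
      have : k = 0 := by omega
      rw [this] at hk
      norm_num [dFall] at hk
    set c₀ : ℝ := α * dFall l 1 k * θ ^ k / (k.factorial : ℝ) with hc₀
    have hc₀neg : c₀ < 0 := by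
      rw [hc₀]
      apply div_neg_of_neg_of_pos
      · have hp : 0 < θ ^ k := pow_pos hθ k
        exact mul_neg_of_neg_of_pos (mul_neg_of_pos_of_neg hα hk) hp
      · exact_mod_cast Nat.factorial_pos k
    have h := (hrate0 k hk1).def (show (0:ℝ) < -c₀/2 by linarith)
    obtain ⟨s, hs1, hs2'⟩ := (h.and self_mem_nhdsWithin).exists
    have hs2 : (0:ℝ) < s := hs2' 
    rw [Real.norm_eq_abs, Real.norm_eq_abs, abs_of_pos hs2] at hs1
    have habs := abs_le.mp hs1
    have hP : 0 ≤ (P {ω | N s ω = k}).toReal := ENNReal.toReal_nonneg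
    have harr : α * s * dFall l 1 k * θ ^ k / (k.factorial : ℝ) = c₀ * s := by
      rw [hc₀]; ring
    rw [harr] at habs
    nlinarith [habs.2, hc₀neg, hs2]
  -- honest case : 1/l = m ∈ ℕ
  obtain ⟨m, hml, hm1⟩ : ∃ m : ℕ, (m:ℝ) * l = 1 ∧ 1 ≤ m := by
    have hex : ∃ n : ℕ, 1 ≤ (n:ℝ) * l := by
      obtain ⟨n, hn⟩ := exists_nat_ge (1/l)
      exact ⟨n, by rw [div_le_iff₀ hl0] at hn; linarith⟩
    set m := Nat.find hex with hm
    have hfind : 1 ≤ (m:ℝ) * l := by rw [hm]; exact Nat.find_spec hex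
    have hlt : ∀ i : ℕ, i < m → (i:ℝ) * l < 1 := by
      intro i hi
      have := Nat.find_min hex hi
      linarith [not_le.mp this]
    have hm0 : 1 ≤ m := by
      rcases Nat.eq_zero_or_pos m with h | h
      · exfalso; rw [h] at hfind; simp at hfind; linarith
      · exact h
    have hpos : 0 < dFall l 1 m := by
      unfold dFall
      apply Finset.prod_pos
      intro i hi
      rw [Finset.mem_range] at hi
      have := hlt i hi
      linarith
    have hsucc : dFall l 1 (m+1) = dFall l 1 m * (1 - (m:ℝ)*l) := by
      unfold dFall
      rw [Finset.prod_range_succ]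
    have h1 : 0 ≤ dFall l 1 (m+1) := hcase (m+1)
    rw [hsucc] at h1
    have h2 : 0 ≤ 1 - (m:ℝ)*l := nonneg_of_mul_nonneg_right h1 hpos
    exact ⟨m, by linarith, hm0⟩
  have hdzero : ∀ k : ℕ, m + 1 ≤ k → dFall l 1 k = 0 := by
    intro k hk
    unfold dFall
    apply Finset.prod_eq_zero (Finset.mem_range.mpr (by omega : m < k))
    rw [hml]; ring
  -- map equality of increments
  have hmapeq : ∀ t s : ℝ, 0 ≤ t → 0 ≤ s →
      P.map (fun ω => N (t+s) ω - N t ω) = P.map (N s) := by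
    intro t s ht hs
    exact map_eq_of_singleton P ((hNmeas _).sub (hNmeas _)) (hNmeas s) (hstat t s ht hs)
  -- small individual probabilities for k > m
  have hsmall : ∀ k : ℕ, m + 1 ≤ k →
      (fun s => (P {ω | N s ω = k}).toReal) =o[nhdsWithin 0 (Set.Ioi 0)] (fun s : ℝ => s) := by
    intro k hk
    have h := hrate0 k (by omega)
    rw [hdzero k hk] at h
    simpa using h
  -- tail is o(s)
  have htail := tail_littleO P N hNmeas hmono
    (fun K s hs => recursion_pow P N hNmeas hN0 hmono hmapeq hindep K s hs) m hsmall
  set g : ℝ → ℝ := fun u => ∫ ω, Real.exp (-(x * (N u ω : ℝ))) ∂P with hg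
  have hg0 : g 0 = 1 := by
    show (∫ ω, Real.exp (-(x * (N 0 ω : ℝ))) ∂P) = 1
    have heq : (fun ω => Real.exp (-(x * (N 0 ω : ℝ)))) = fun _ => (1:ℝ) := by
      funext ω; rw [hN0 ω]; simp
    rw [heq, integral_const]
    simp
  have hmul : ∀ t s : ℝ, 0 ≤ t → 0 ≤ s → g (t+s) = g t * g s :=
    fun t s ht hs => g_mult P N hNmeas hN0 hmono hmapeq hindep x hx.le t s ht hs
  -- the constant
  set ck : ℕ → ℝ := fun k => α * dFall l 1 k * θ ^ k / (k.factorial : ℝ) with hck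
  set cfin : ℝ := ∑ k ∈ Finset.range (m+1), (Real.exp (-(x*(k:ℝ))) - 1) * ck k with hcfin
  set S : ℝ → ℝ := fun s =>
    ∑ k ∈ Finset.range (m+1), (1 - Real.exp (-(x*(k:ℝ)))) * (P {ω | N s ω = k}).toReal with hS
  have hD : (fun s => 1 - g s - S s) =o[nhdsWithin 0 (Set.Ioi 0)] (fun s : ℝ => s) := by
    rw [isLittleO_iff]
    intro c hc
    filter_upwards [htail.def hc] with s hs
    obtain ⟨hb0, hb1⟩ := partition_bound P (N s) (hNmeas s) x hx.le m
    rw [Real.norm_eq_abs, abs_of_nonneg hb0]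
    calc 1 - g s - S s ≤ (P {ω | m+1 ≤ N s ω}).toReal := hb1
      _ ≤ ‖(P {ω | m+1 ≤ N s ω}).toReal‖ := le_abs_self _
      _ ≤ c * ‖s‖ := hs
  have hterm : ∀ k ∈ Finset.range (m+1),
      (fun s => (1 - Real.exp (-(x*(k:ℝ)))) * ((P {ω | N s ω = k}).toReal - ck k * s))
        =o[nhdsWithin 0 (Set.Ioi 0)] (fun s : ℝ => s) := by
    intro k _
    rcases Nat.eq_zero_or_pos k with h0 | h1
    · have : (fun s : ℝ => (1 - Real.exp (-(x*(k:ℝ)))) * ((P {ω | N s ω = k}).toReal - ck k * s))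
          = fun _ => (0:ℝ) := by
        funext s
        rw [h0]
        simp
      rw [this]
      exact isLittleO_zero _ _
    · have h := hrate0 k h1
      have heq : (fun s => (P {ω | N s ω = k}).toReal - α * s * dFall l 1 k * θ ^ k / (k.factorial : ℝ))
          = fun s => (P {ω | N s ω = k}).toReal - ck k * s := by
        funext s; rw [hck]; ring_nf
      rw [heq] at h
      exact h.const_mul_left _
  have hE : (fun s => S s + cfin * s) =o[nhdsWithin 0 (Set.Ioi 0)] (fun s : ℝ => s) := by
    have hsum := Asymptotics.IsLittleO.fun_sum hterm
    have heq : (fun s => S s + cfin * s) = fun s => ∑ k ∈ Finset.range (m+1),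
        (1 - Real.exp (-(x*(k:ℝ)))) * ((P {ω | N s ω = k}).toReal - ck k * s) := by
      funext s
      rw [hS, hcfin, Finset.sum_mul, ← Finset.sum_add_distrib]
      apply Finset.sum_congr rfl
      intro k _
      ring
    rw [heq]
    exact hsum
  have hlinO : (fun s => g s - 1 - cfin * s) =o[nhdsWithin 0 (Set.Ioi 0)] (fun s : ℝ => s) := by
    have h := (hD.neg_left).sub hE
    have heq : (fun s => -(1 - g s - S s) - (S s + cfin * s)) = fun s => g s - 1 - cfin * s := by
      funext s; ring
    rwa [heq] at h
  have hlin : ∀ ε : ℝ, 0 < ε → ∀ᶠ s in nhdsWithin 0 (Set.Ioi 0), |g s - 1 - cfin*s| ≤ ε * s := by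
    intro ε hε
    filter_upwards [hlinO.def hε, self_mem_nhdsWithin] with s h1 h2'
    have h2 : (0:ℝ) < s := h2' 
    rw [Real.norm_eq_abs, Real.norm_eq_abs, abs_of_pos h2] at h1
    exact h1
  have hgt : ∀ t : ℝ, 0 ≤ t → g t = Real.exp (cfin * t) := exp_of_mult g cfin hg0 hmul hlin
  -- identify the constant
  have hdeg : ∀ u : ℝ, degExp l 1 u = (1 + l*u)^m := by
    intro u
    unfold degExp
    have h1 : (1:ℝ)/l = (m:ℕ) := by
      field_simp
      linarith [hml]
    rw [h1, Real.rpow_natCast]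
  have hcval : cfin = α * (degExp l 1 (Real.exp (-x) * θ) - degExp l 1 θ) := by
    rw [hdeg, hdeg, ← dFall_sum_eq l m hml (Real.exp (-x) * θ), ← dFall_sum_eq l m hml θ,
      hcfin, ← Finset.sum_sub_distrib, Finset.mul_sum]
    apply Finset.sum_congr rfl
    intro k _
    rw [hck]
    have hexp : Real.exp (-(x*(k:ℝ))) = Real.exp (-x) ^ k := by
      rw [← Real.exp_nat_mul]
      congr 1
      ring
    rw [hexp, mul_pow]
    ring
  have hgoal3 : ∀ t : ℝ, 0 ≤ t →
      g t = Real.exp (α * t * (degExp l 1 (Real.exp (-x) * θ) - degExp l 1 θ)) := by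
    intro t ht
    rw [hgt t ht, hcval]
    congr 1
    ring
  refine ⟨?_, hg0, hgoal3⟩
  intro t ht
  rw [Set.mem_Ici] at ht
  have h1 : HasDerivAt (fun u : ℝ => cfin * u) cfin t := by
    simpa using (hasDerivAt_id t).const_mul cfin
  have h2 : HasDerivAt (fun u : ℝ => Real.exp (cfin * u)) (Real.exp (cfin * t) * cfin) t := h1.exp
  have h3 : HasDerivWithinAt (fun u : ℝ => Real.exp (cfin * u)) (Real.exp (cfin * t) * cfin)
      (Set.Ici 0) t := h2.hasDerivWithinAt
  have h4 : HasDerivWithinAt g (Real.exp (cfin * t) * cfin) (Set.Ici 0) t := by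
    apply h3.congr
    · intro u hu
      exact hgt u hu
    · exact hgt t ht
  have h5 : Real.exp (cfin * t) * cfin
      = α * (degExp l 1 (Real.exp (-x) * θ) - degExp l 1 θ) * g t := by
    rw [hgt t ht, hcval]
    ring
  rw [h5] at h4
  exact h4
end

section
/- If {N_λ(t) | t ≥ 0} is a degenerate Bell process with parameters (α,θ), then for every t > 0 the random variable N_λ(t) has the degenerate Bell distribution DB_λ(αt, θ); that is, P{N_λ(t)=k} = e^{-αt(e_λ(θ)-1)} θ^k φ_{k,λ}(αt)/k! for all k ≥ 0. -/
set_option maxHeartbeats 1600000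

open Real MeasureTheory ProbabilityTheory Filter Asymptotics

/-- Uniqueness of power-series coefficients from vanishing on a right neighborhood of 0. -/
lemma aux_coeff_unique (d : ℕ → ℝ) (M R : ℝ) (hR : 1 ≤ R) (hM : 0 ≤ M)
    (hbound : ∀ k, |d k| ≤ M * R ^ k)
    (hzero : ∀ u : ℝ, 0 < u → u ≤ 1 / (2 * R) → HasSum (fun k => d k * u ^ k) 0) :
    ∀ k, d k = 0 := by
  have hRpos : (0:ℝ) < R := lt_of_lt_of_le one_pos hR
  intro n
  induction n using Nat.strong_induction_on with
  | _ n ih =>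
    have key : ∀ u : ℝ, 0 < u → u ≤ 1 / (2 * R) → |d n| ≤ 2 * M * R ^ (n + 1) * u := by
      intro u hu hu2
      have hRu : R * u ≤ 1 / 2 := by
        calc R * u ≤ R * (1 / (2 * R)) := by
              exact mul_le_mul_of_nonneg_left hu2 hRpos.le
          _ = 1 / 2 := by field_simp
      have hRu0 : 0 ≤ R * u := by positivity
      have hRulon : R * u < 1 := lt_of_le_of_lt hRu (by norm_num)
      have hsummaj : Summable (fun k : ℕ => M * (R * u) ^ k) :=
        (summable_geometric_of_lt_one hRu0 hRulon).mul_left M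
      have hbnd : ∀ k, ‖d k * u ^ k‖ ≤ M * (R * u) ^ k := by
        intro k
        rw [norm_mul, Real.norm_eq_abs, Real.norm_eq_abs,
          abs_of_nonneg (pow_nonneg hu.le k), mul_pow]
        calc |d k| * u ^ k ≤ M * R ^ k * u ^ k :=
              mul_le_mul_of_nonneg_right (hbound k) (pow_nonneg hu.le k)
          _ = M * (R ^ k * u ^ k) := by ring
      have hsum : Summable (fun k => d k * u ^ k) := Summable.of_norm_bounded hsummaj hbnd
      have hsplit := (Summable.sum_add_tsum_nat_add (f := fun k => d k * u ^ k) (n + 1) hsum).symm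
      rw [(hzero u hu hu2).tsum_eq] at hsplit
      have hfin : ∑ k ∈ Finset.range (n + 1), d k * u ^ k = d n * u ^ n := by
        rw [Finset.sum_range_succ]
        have : ∑ k ∈ Finset.range n, d k * u ^ k = 0 :=
          Finset.sum_eq_zero fun k hk => by rw [ih k (Finset.mem_range.mp hk), zero_mul]
        rw [this, zero_add]
      rw [hfin] at hsplit
      have hmajshift : Summable (fun k : ℕ => M * (R * u) ^ (k + (n + 1))) :=
        (summable_nat_add_iff (f := fun k : ℕ => M * (R * u) ^ k) (n+1)).2 hsummaj
      have hnorm : Summable (fun k : ℕ => ‖d (k + (n + 1)) * u ^ (k + (n + 1))‖) :=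
        Summable.of_nonneg_of_le (fun _ => norm_nonneg _) (fun k => hbnd _) hmajshift
      have htail : |∑' k : ℕ, d (k + (n + 1)) * u ^ (k + (n + 1))| ≤
          M * (R * u) ^ (n + 1) * 2 := by
        calc |∑' k : ℕ, d (k + (n + 1)) * u ^ (k + (n + 1))|
            ≤ ∑' k : ℕ, ‖d (k + (n + 1)) * u ^ (k + (n + 1))‖ :=
              norm_tsum_le_tsum_norm hnorm
          _ ≤ ∑' k : ℕ, M * (R * u) ^ (k + (n + 1)) :=
              Summable.tsum_le_tsum (fun k => hbnd _) hnorm hmajshift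
          _ = (M * (R * u) ^ (n + 1)) * ∑' k : ℕ, (R * u) ^ k := by
              rw [← tsum_mul_left]
              exact tsum_congr fun k => by rw [pow_add]; ring
          _ = (M * (R * u) ^ (n + 1)) * (1 - R * u)⁻¹ := by
              rw [tsum_geometric_of_lt_one hRu0 hRulon]
          _ ≤ M * (R * u) ^ (n + 1) * 2 := by
              apply mul_le_mul_of_nonneg_left _ (by positivity)
              rw [inv_le_comm₀ (by linarith) (by norm_num)]
              linarith
      have hdn : |d n| * u ^ n ≤ M * (R * u) ^ (n + 1) * 2 := by
        have : d n * u ^ n = -(∑' k : ℕ, d (k + (n + 1)) * u ^ (k + (n + 1))) := by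
          linarith [hsplit]
        rw [← abs_of_nonneg (pow_nonneg hu.le n) (a := u ^ n), ← abs_mul, this, abs_neg]
        exact htail
      have hun : (0:ℝ) < u ^ n := pow_pos hu n
      rw [mul_pow, pow_succ (a := u)] at hdn
      calc |d n| = |d n| * u ^ n / u ^ n := by field_simp
        _ ≤ M * (R ^ (n + 1) * (u ^ n * u)) * 2 / u ^ n := by
            exact div_le_div_of_nonneg_right hdn hun.le
        _ = 2 * M * R ^ (n + 1) * u := by field_simp
    by_contra hne
    have hpos : 0 < |d n| := abs_pos.mpr hne
    set u0 := min (1 / (2 * R)) (|d n| / (2 * M * R ^ (n + 1) + 1)) with hu0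
    have hu0pos : 0 < u0 := lt_min (by positivity) (by positivity)
    have h := key u0 hu0pos (min_le_left _ _)
    have h3 : (0:ℝ) < 2 * M * R ^ (n + 1) + 1 := by positivity
    have : 2 * M * R ^ (n + 1) * u0 < |d n| := by
      calc 2 * M * R ^ (n + 1) * u0
          ≤ 2 * M * R ^ (n + 1) * (|d n| / (2 * M * R ^ (n + 1) + 1)) :=
            mul_le_mul_of_nonneg_left (min_le_right _ _) (by positivity)
        _ < |d n| := by
            rw [← mul_div_assoc, div_lt_iff₀ h3]
            nlinarith [pow_pos hRpos (n+1)]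
    linarith

lemma aux_cauchy_exp (f : ℝ → ℝ)
    (hmul : ∀ t s : ℝ, 0 ≤ t → 0 ≤ s → f (t + s) = f t * f s)
    (hpos : ∀ t : ℝ, 0 ≤ t → 0 < f t)
    (hle : ∀ t : ℝ, 0 ≤ t → f t ≤ 1) :
    ∀ t : ℝ, 0 ≤ t → f t = Real.exp (t * Real.log (f 1)) := by
  set h : ℝ → ℝ := fun t => Real.log (f t) with hh
  have hf0 : f 0 = 1 := by
    have h1 := hmul 0 0 le_rfl le_rfl
    rw [zero_add] at h1
    have h0 := hpos 0 le_rfl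
    have h2 : f 0 * (f 0 - 1) = 0 := by rw [mul_sub, mul_one, ← h1, sub_self]
    rcases mul_eq_zero.mp h2 with h3 | h3
    · exact absurd h3 h0.ne'
    · linarith
  have h0 : h 0 = 0 := by simp [hh, hf0]
  have hadd : ∀ t s : ℝ, 0 ≤ t → 0 ≤ s → h (t + s) = h t + h s := by
    intro t s ht hs
    simp only [hh, hmul t s ht hs]
    exact Real.log_mul (hpos t ht).ne' (hpos s hs).ne'
  have hanti : ∀ a b : ℝ, 0 ≤ a → a ≤ b → h b ≤ h a := by
    intro a b ha hab
    have hfb : f b ≤ f a := by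
      have : b = a + (b - a) := by ring
      rw [this, hmul a (b - a) ha (by linarith)]
      exact mul_le_of_le_one_right (hpos a ha).le (hle (b - a) (by linarith))
    exact Real.log_le_log (hpos b (le_trans ha hab)) hfb
  have hnat : ∀ (n : ℕ) (t : ℝ), 0 ≤ t → h ((n : ℝ) * t) = n * h t := by
    intro n
    induction n with
    | zero => intro t _; simp [h0]
    | succ n ihn =>
      intro t ht
      have : ((n : ℝ) + 1) * t = (n : ℝ) * t + t := by ring
      push_cast
      rw [this, hadd _ t (by positivity) ht, ihn t ht]
      ring
  have h1le : h 1 ≤ 0 := Real.log_nonpos (hpos 1 zero_le_one).le (hle 1 zero_le_one)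
  have hrat : ∀ (a b : ℕ), 1 ≤ b → h ((a : ℝ) / b) = ((a : ℝ) / b) * h 1 := by
    intro a b hb
    have hb' : (0:ℝ) < b := by exact_mod_cast hb
    have e1 : h ((a : ℝ)) = a * h 1 := by
      have := hnat a 1 zero_le_one
      simpa using this
    have e2 : (b : ℝ) * h ((a : ℝ) / b) = h ((b : ℝ) * ((a : ℝ) / b)) :=
      (hnat b _ (by positivity)).symm
    rw [mul_div_cancel₀ _ hb'.ne'] at e2
    rw [e1] at e2
    field_simp
    linarith [e2]
  have key : ∀ t : ℝ, 0 ≤ t → h t = t * h 1 := by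
    intro t ht
    rcases eq_or_lt_of_le ht with rfl | htpos
    · simp [h0]
    rcases eq_or_lt_of_le h1le with h1z | h1neg
    · -- h 1 = 0
      have hle0 : h t ≤ 0 := by simpa [h0] using hanti 0 t le_rfl ht
      obtain ⟨n, hn⟩ := exists_nat_gt t
      have hge : h ((n:ℝ)) ≤ h t := hanti t _ ht hn.le
      have hn0 : h ((n:ℝ)) = 0 := by simpa [h1z] using hnat n 1 zero_le_one
      rw [hn0] at hge
      rw [h1z, mul_zero]
      linarith
    · -- h 1 < 0
      have hup : ∀ ε : ℝ, 0 < ε → h t ≤ t * h 1 + ε := by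
        intro ε hε
        set δ : ℝ := min t (ε / (-(h 1))) with hδ
        have hδpos : 0 < δ := lt_min htpos (div_pos hε (by linarith))
        obtain ⟨b, hb⟩ := exists_nat_gt (1 / δ)
        have hbpos : (0:ℝ) < b := lt_trans (by positivity) hb
        have hb1 : 1 ≤ b := by exact_mod_cast hbpos
        set a : ℕ := ⌊t * b⌋₊ with ha
        have haq : (a : ℝ) / b ≤ t := by
          rw [div_le_iff₀ hbpos]
          exact Nat.floor_le (by positivity)
        have haq2 : t - δ < (a : ℝ) / b := by
          have h2 : t * b < a + 1 := Nat.lt_floor_add_one _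
          have h8 : (1:ℝ) < δ * b := by
            have := (div_lt_iff₀ hδpos).mp hb
            linarith [this]
          have h9 : 1/(b:ℝ) < δ := by rw [div_lt_iff₀ hbpos]; linarith [h8]
          have h10 : t - 1/(b:ℝ) ≤ (a:ℝ)/b := by
            rw [le_div_iff₀ hbpos]
            have he : (t - 1/(b:ℝ))*b = t*b - 1 := by field_simp
            rw [he]
            linarith [h2]
          linarith [h9, h10]
        have hq0 : 0 ≤ (a : ℝ) / b := by positivity
        have := hanti ((a:ℝ)/b) t hq0 haq
        rw [hrat a b hb1] at this
        have hd : ((a:ℝ)/b) * h 1 ≤ t * h 1 + ε := by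
          have h4 : t - (a:ℝ)/b < δ := by linarith
          have h5 : 0 ≤ t - (a:ℝ)/b := by linarith
          have h6 : (t - (a:ℝ)/b) * (-(h 1)) ≤ δ * (-(h 1)) :=
            mul_le_mul_of_nonneg_right h4.le (by linarith)
          have h7 : δ * (-(h 1)) ≤ ε := by
            have : δ ≤ ε / (-(h 1)) := min_le_right _ _
            rw [le_div_iff₀ (by linarith)] at this
            linarith
          nlinarith
        linarith
      have hdown : ∀ ε : ℝ, 0 < ε → t * h 1 - ε ≤ h t := by
        intro ε hε
        set δ : ℝ := ε / (-(h 1)) with hδ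
        have hδpos : 0 < δ := div_pos hε (by linarith)
        obtain ⟨b, hb⟩ := exists_nat_gt (1 / δ)
        have hbpos : (0:ℝ) < b := lt_trans (by positivity) hb
        have hb1 : 1 ≤ b := by exact_mod_cast hbpos
        set a : ℕ := ⌊t * b⌋₊ + 1 with ha
        have haq : t ≤ (a : ℝ) / b := by
          rw [le_div_iff₀ hbpos]
          push_cast [ha]
          exact (Nat.lt_floor_add_one _).le
        have haq2 : (a : ℝ) / b < t + δ := by
          have h2 : (⌊t * b⌋₊ : ℝ) ≤ t * b := Nat.floor_le (by positivity)
          have h8 : (1:ℝ) < δ * b := by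
            have := (div_lt_iff₀ hδpos).mp hb
            linarith [this]
          rw [div_lt_iff₀ hbpos]
          push_cast [ha]
          nlinarith [h2, h8]
        have := hanti t ((a:ℝ)/b) ht haq
        rw [hrat a b hb1] at this
        have hd : t * h 1 - ε ≤ ((a:ℝ)/b) * h 1 := by
          have h4 : (a:ℝ)/b - t < δ := by linarith
          have h5 : 0 ≤ (a:ℝ)/b - t := by linarith
          have h6 : ((a:ℝ)/b - t) * (-(h 1)) ≤ δ * (-(h 1)) :=
            mul_le_mul_of_nonneg_right h4.le (by linarith)
          have h7 : δ * (-(h 1)) ≤ ε := by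
            rw [hδ]; rw [div_mul_cancel₀]
            linarith
          nlinarith
        linarith
      have hle' : h t ≤ t * h 1 := by
        by_contra hc
        push_neg at hc
        have := hup ((h t - t * h 1)/2) (by linarith)
        linarith
      have hge' : t * h 1 ≤ h t := by
        by_contra hc
        push_neg at hc
        have := hdown ((t * h 1 - h t)/2) (by linarith)
        linarith
      linarith
  intro t ht
  rw [← key t ht]
  exact (Real.exp_log (hpos t ht)).symm

lemma aux_exp_slope (β : ℝ) :
    Tendsto (fun s : ℝ => (1 - Real.exp (-(β * s))) / s)
      (nhdsWithin 0 (Set.Ioi 0)) (nhds β) := by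
  have h1 : HasDerivAt (fun s : ℝ => -(β * s)) (-β) 0 := by
    simpa using ((hasDerivAt_id (0:ℝ)).const_mul β).fun_neg
  have h2 : HasDerivAt (fun s : ℝ => Real.exp (-(β * s))) (-β) 0 := by
    have := (Real.hasDerivAt_exp (-(β * 0))).comp 0 h1
    simpa [Function.comp_def] using this
  have h3 : HasDerivAt (fun s : ℝ => 1 - Real.exp (-(β * s))) β 0 := by
    simpa using h2.const_sub 1
  have h4 := hasDerivAt_iff_tendsto_slope.mp h3
  have h5 : Tendsto (slope (fun s : ℝ => 1 - Real.exp (-(β * s))) 0)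
      (nhdsWithin 0 (Set.Ioi 0)) (nhds β) :=
    h4.mono_left (nhdsWithin_mono 0 (fun x hx => ne_of_gt hx))
  apply h5.congr'
  filter_upwards [self_mem_nhdsWithin] with s hs
  have : s ≠ 0 := ne_of_gt hs
  simp [slope_def_field, this]

lemma aux_prod_choose (m : ℕ) :
    ∀ k : ℕ, ∏ i ∈ Finset.range k, ((m : ℝ) - i) = ((k.factorial * m.choose k : ℕ) : ℝ) := by
  intro k
  induction k with
  | zero => simp
  | succ k ih =>
    rw [Finset.prod_range_succ, ih]
    rcases lt_trichotomy k m with hkm | rfl | hkm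
    · have hle : k ≤ m := hkm.le
      have hnat : m.choose (k+1) * (k+1) = m.choose k * (m - k) := Nat.choose_succ_right_eq m k
      have hcast : ((m - k : ℕ) : ℝ) = (m : ℝ) - k := by
        push_cast [Nat.cast_sub hle]; ring
      have : ((k+1).factorial * m.choose (k+1) : ℕ) = (k.factorial * m.choose k) * (m - k) := by
        rw [Nat.factorial_succ]
        calc (k+1) * k.factorial * m.choose (k+1)
            = k.factorial * (m.choose (k+1) * (k+1)) := by ring
          _ = k.factorial * (m.choose k * (m - k)) := by rw [hnat]
          _ = k.factorial * m.choose k * (m - k) := by ring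
      rw [this]
      push_cast [Nat.cast_sub hle]
      ring
    · simp [Nat.choose_succ_self]
    · have h1 : m.choose k = 0 := Nat.choose_eq_zero_of_lt hkm
      have h2 : m.choose (k+1) = 0 := Nat.choose_eq_zero_of_lt (by omega)
      simp [h1, h2]

theorem degenerate_bell_process_marginal_distribution (l α θ : ℝ) (hl : l ∈ Set.Ioc (0 : ℝ) 1) (hα : 0 < α) (hθ : 0 < θ)
    {Ω : Type*} [MeasurableSpace Ω] (P : Measure Ω) [IsProbabilityMeasure P]
    (N : ℝ → Ω → ℕ)
    (hNmeas : ∀ t : ℝ, Measurable (N t))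
    (hN0 : ∀ ω, N 0 ω = 0)
    (hmono : ∀ ω, ∀ ⦃s t : ℝ⦄, s ≤ t → N s ω ≤ N t ω)
    (hstat : ∀ t s : ℝ, 0 ≤ t → 0 ≤ s → ∀ k : ℕ,
      P {ω | N (t + s) ω - N t ω = k} = P {ω | N s ω = k})
    (hindep : ∀ t₁ t₂ t₃ : ℝ, 0 ≤ t₁ → t₁ ≤ t₂ → t₂ ≤ t₃ →
      IndepFun (fun ω => N t₂ ω - N t₁ ω) (fun ω => N t₃ ω - N t₂ ω) P)
    (hrate : ∀ k : ℕ, 1 ≤ k → ∀ t : ℝ, 0 ≤ t →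
      (fun s => (P {ω | N (t + s) ω - N t ω = k}).toReal
          - α * s * dFall l 1 k * θ ^ k / (k.factorial : ℝ))
        =o[nhdsWithin 0 (Set.Ioi 0)] (fun s : ℝ => s))
    (φ : ℕ → ℝ → ℝ)
    (hφ : ∀ x t : ℝ, 0 < 1 + l * t →
      HasSum (fun n : ℕ => φ n x * t ^ n / (n.factorial : ℝ))
        (Real.exp (x * (degExp l 1 t - 1)))) :
    ∀ t : ℝ, 0 < t → ∀ k : ℕ,
      P {ω | N t ω = k} =
        ENNReal.ofReal (Real.exp (-(α * t * (degExp l 1 θ - 1))) * θ ^ k *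
          φ k (α * t) / (k.factorial : ℝ)) := by
  classical
  obtain ⟨hl0, hl1⟩ := hl
  set p : ℕ → ℝ → ℝ := fun k s => (P {ω | N s ω = k}).toReal with hpdef
  have hmeasev : ∀ (s : ℝ) (k : ℕ), MeasurableSet {ω | N s ω = k} := by
    intro s k
    exact hNmeas s (measurableSet_singleton k)
  have hpnonneg : ∀ k s, 0 ≤ p k s := fun k s => ENNReal.toReal_nonneg
  have hple : ∀ k s, p k s ≤ 1 := by
    intro k s
    rw [hpdef]
    simpa using ENNReal.toReal_mono (by simp) (prob_le_one (μ := P) (s := {ω | N s ω = k}))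
  have hhs : ∀ s : ℝ, HasSum (fun k => p k s) 1 := by
    intro s
    have hdisj : Pairwise (Function.onFun Disjoint fun k : ℕ => {ω | N s ω = k}) := by
      intro i j hij
      simp only [Function.onFun, Set.disjoint_left]
      intro ω hωi hωj
      simp only [Set.mem_setOf_eq] at hωi hωj
      exact hij (hωi ▸ hωj ▸ rfl)
    have hunion : ⋃ k : ℕ, {ω | N s ω = k} = Set.univ := by
      ext ω
      simp only [Set.mem_iUnion, Set.mem_univ, iff_true, Set.mem_setOf_eq]
      exact ⟨N s ω, rfl⟩
    have hE : ∑' k : ℕ, P {ω | N s ω = k} = 1 := by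
      rw [← measure_iUnion hdisj (fun k => hmeasev s k), hunion, measure_univ]
    have hsummable : Summable (fun k => p k s) := by
      apply ENNReal.summable_toReal
      rw [hE]
      exact ENNReal.one_ne_top
    rw [hsummable.hasSum_iff]
    have := ENNReal.tsum_toReal_eq (f := fun k : ℕ => P {ω | N s ω = k})
      (fun k => measure_ne_top P _)
    rw [hpdef]
    simp only
    rw [← this, hE]
    simp
  have hconv : ∀ (k : ℕ) (u v : ℝ), 0 ≤ u → 0 ≤ v →
      p k (u + v) = ∑ j ∈ Finset.range (k + 1), p j u * p (k - j) v := by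
    intro k u v hu hv
    have huv : u ≤ u + v := le_add_of_nonneg_right hv
    have hEq : {ω | N (u+v) ω = k} =
        ⋃ j ∈ Finset.range (k+1),
          ({ω | N u ω = j} ∩ {ω | N (u+v) ω - N u ω = k - j}) := by
      ext ω
      simp only [Set.mem_setOf_eq, Finset.mem_range, Set.mem_iUnion, Set.mem_inter_iff]
      have hm := hmono ω huv
      constructor
      · intro hk
        exact ⟨N u ω, by omega, rfl, by omega⟩
      · rintro ⟨j, hjk, hj, hdiff⟩
        omega
    have hdisj : Set.PairwiseDisjoint (Finset.range (k+1) : Set ℕ)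
        (fun j => {ω | N u ω = j} ∩ {ω | N (u+v) ω - N u ω = k - j}) := by
      intro i _ j _ hij
      apply Set.disjoint_left.mpr
      rintro ω ⟨hi, _⟩ ⟨hj, _⟩
      simp only [Set.mem_setOf_eq] at hi hj
      exact hij (hi ▸ hj ▸ rfl)
    have hmeas2 : ∀ j : ℕ, MeasurableSet {ω | N (u+v) ω - N u ω = j} := by
      intro j
      exact ((hNmeas (u+v)).sub (hNmeas u)) (measurableSet_singleton j)
    have hPE : P {ω | N (u+v) ω = k} =
        ∑ j ∈ Finset.range (k+1),
          P ({ω | N u ω = j} ∩ {ω | N (u+v) ω - N u ω = k - j}) := by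
      rw [hEq, measure_biUnion_finset hdisj
        (fun j _ => (hmeasev u j).inter (hmeas2 (k - j)))]
    have hindep' := hindep 0 u (u+v) le_rfl hu huv
    have hfun : (fun ω => N u ω - N 0 ω) = N u := funext fun ω => by
      rw [hN0, Nat.sub_zero]
    rw [hfun] at hindep'
    have hterm : ∀ j : ℕ,
        P ({ω | N u ω = j} ∩ {ω | N (u+v) ω - N u ω = k - j}) =
          P {ω | N u ω = j} * P {ω | N v ω = k - j} := by
      intro j
      have h1 := hindep'.measure_inter_preimage_eq_mul (s := {j}) (t := {k - j})
        (measurableSet_singleton _) (measurableSet_singleton _)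
      have h2 : N u ⁻¹' {j} = {ω | N u ω = j} := rfl
      have h3 : (fun ω => N (u+v) ω - N u ω) ⁻¹' {k - j} =
          {ω | N (u+v) ω - N u ω = k - j} := rfl
      rw [h2, h3] at h1
      rw [h1, hstat u v hu hv (k - j)]
    have hfinal : P {ω | N (u+v) ω = k} =
        ∑ j ∈ Finset.range (k+1), P {ω | N u ω = j} * P {ω | N v ω = k - j} := by
      rw [hPE]
      exact Finset.sum_congr rfl (fun j _ => hterm j)
    rw [hpdef]
    simp only
    rw [hfinal, ENNReal.toReal_sum (fun j _ =>
      ENNReal.mul_ne_top (measure_ne_top P _) (measure_ne_top P _))]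
    exact Finset.sum_congr rfl (fun j _ => ENNReal.toReal_mul)
  have hp00 : p 0 0 = 1 := by
    have : {ω | N (0:ℝ) ω = 0} = Set.univ := by
      ext ω
      simp [hN0 ω]
    rw [hpdef]
    simp only [this, measure_univ]
    simp
  set c : ℕ → ℝ := fun k => α * dFall l 1 k * θ ^ k / (k.factorial : ℝ) with hcdef
  have hlim : ∀ k, 1 ≤ k →
      Tendsto (fun s => p k s / s) (nhdsWithin 0 (Set.Ioi 0)) (nhds (c k)) := by
    intro k hk
    have ho := hrate k hk 0 le_rfl
    have hset : ∀ s : ℝ, {ω | N (0 + s) ω - N 0 ω = k} = {ω | N s ω = k} := by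
      intro s
      ext ω
      simp [hN0 ω, zero_add]
    have ho' : (fun s => p k s - s * c k) =o[nhdsWithin 0 (Set.Ioi 0)]
        (fun s : ℝ => s) := by
      apply ho.congr' _ EventuallyEq.rfl
      apply Eventually.of_forall
      intro s
      show (P {ω | N (0 + s) ω - N 0 ω = k}).toReal
          - α * s * dFall l 1 k * θ ^ k / (k.factorial : ℝ) = p k s - s * c k
      rw [hset s, hpdef, hcdef]
      simp only
      ring
    have h0 := ho'.tendsto_div_nhds_zero
    have h1 : Tendsto (fun s => p k s / s - c k) (nhdsWithin 0 (Set.Ioi 0)) (nhds 0) := by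
      apply h0.congr'
      filter_upwards [self_mem_nhdsWithin] with s hs
      have hs0 : s ≠ 0 := ne_of_gt hs
      field_simp
    have h2 := h1.add_const (c k)
    simpa using h2
  have hlim2 : ∀ k, 1 ≤ k →
      Tendsto (fun s : ℝ => p k (s + s) / (s + s)) (nhdsWithin 0 (Set.Ioi 0)) (nhds (c k)) := by
    intro k hk
    apply (hlim k hk).comp
    apply tendsto_nhdsWithin_of_tendsto_nhds_of_eventually_within
    · have : Tendsto (fun s : ℝ => s + s) (nhds 0) (nhds (0 + 0)) :=
        Filter.Tendsto.add tendsto_id tendsto_id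
      simpa using this.mono_left nhdsWithin_le_nhds
    · filter_upwards [self_mem_nhdsWithin] with s hs
      exact add_pos (Set.mem_Ioi.mp hs) (Set.mem_Ioi.mp hs)
  have hcnn : ∀ k, 1 ≤ k → 0 ≤ c k := by
    intro k hk
    refine ge_of_tendsto (hlim k hk) ?_
    filter_upwards [self_mem_nhdsWithin] with s hs
    exact div_nonneg (hpnonneg k s) (le_of_lt hs)
  obtain ⟨m, hm1, hml⟩ : ∃ m : ℕ, 1 ≤ m ∧ (m : ℝ) * l = 1 := by
    by_contra hcon
    push_neg at hcon
    set m := ⌊1/l⌋₊ with hm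
    have hl_inv : (1:ℝ) ≤ 1 / l := by
      rw [le_div_iff₀ hl0]
      linarith
    have hm1 : 1 ≤ m := by
      rw [hm]
      exact_mod_cast Nat.le_floor (by exact_mod_cast hl_inv)
    have hmle : (m:ℝ) * l ≤ 1 := by
      have := Nat.floor_le (by positivity : (0:ℝ) ≤ 1 / l)
      calc (m:ℝ) * l ≤ (1/l) * l := mul_le_mul_of_nonneg_right this hl0.le
        _ = 1 := by field_simp
    have hmlt : (m:ℝ) * l < 1 := lt_of_le_of_ne hmle (hcon m hm1)
    have hgt : 1 < ((m:ℝ)+1) * l := by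
      have h1 : 1/l < (m:ℝ) + 1 := Nat.lt_floor_add_one (1/l)
      calc (1:ℝ) = (1/l) * l := by field_simp
        _ < ((m:ℝ)+1) * l := mul_lt_mul_of_pos_right h1 hl0
    have hdneg : dFall l 1 (m+2) < 0 := by
      show (∏ i ∈ Finset.range (m+2), ((1:ℝ) - i * l)) < 0
      rw [Finset.prod_range_succ]
      apply mul_neg_of_pos_of_neg
      · apply Finset.prod_pos
        intro i hi
        simp only [Finset.mem_range] at hi
        have hi' : (i:ℝ) ≤ (m:ℝ) := by exact_mod_cast Nat.lt_succ_iff.mp hi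
        have : (i:ℝ) * l ≤ (m:ℝ) * l := mul_le_mul_of_nonneg_right hi' hl0.le
        linarith
      · push_cast
        linarith
    have hcneg : c (m+2) < 0 := by
      rw [hcdef]
      simp only
      apply div_neg_of_neg_of_pos
      · exact mul_neg_of_neg_of_pos (mul_neg_of_pos_of_neg hα hdneg) (pow_pos hθ _)
      · exact_mod_cast Nat.factorial_pos _
    exact absurd (hcnn (m+2) (by omega)) (not_le.mpr hcneg)
  have hdF : ∀ k, dFall l 1 k = l ^ k * ((k.factorial * m.choose k : ℕ) : ℝ) := by
    intro k
    show (∏ i ∈ Finset.range k, ((1:ℝ) - i * l)) = _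
    have heq : ∀ i ∈ Finset.range k, (1 : ℝ) - i * l = l * ((m:ℝ) - i) := by
      intro i _
      rw [← hml]
      ring
    rw [Finset.prod_congr rfl heq, Finset.prod_mul_distrib, Finset.prod_const,
      aux_prod_choose m k, Finset.card_range]
  have hcval : ∀ k, c k = α * ((l * θ) ^ k * (m.choose k : ℝ)) := by
    intro k
    rw [hcdef]
    simp only
    rw [hdF k]
    have hkf : ((k.factorial : ℕ) : ℝ) ≠ 0 := by
      exact_mod_cast (Nat.factorial_pos k).ne'
    push_cast
    field_simp
    ring
  have hp0mul : ∀ u v : ℝ, 0 ≤ u → 0 ≤ v → p 0 (u + v) = p 0 u * p 0 v := by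
    intro u v hu hv
    simpa using hconv 0 u v hu hv
  have hc1pos : 0 < c 1 := by
    rw [hcval 1]
    have hc : (0:ℝ) < (m.choose 1 : ℝ) := by
      rw [Nat.choose_one_right]
      exact_mod_cast hm1
    exact mul_pos hα (mul_pos (pow_pos (mul_pos hl0 hθ) 1) hc)
  have hp1double : ∀ s : ℝ, 0 ≤ s → p 1 (s + s) = 2 * (p 0 s * p 1 s) := by
    intro s hs
    rw [hconv 1 s s hs hs, Finset.sum_range_succ, Finset.sum_range_one]
    norm_num
    ring
  have hp0lim : Tendsto (p 0) (nhdsWithin 0 (Set.Ioi 0)) (nhds 1) := by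
    have hev : ∀ᶠ s in nhdsWithin 0 (Set.Ioi 0), 0 < p 1 s := by
      have h1 := (hlim 1 le_rfl).eventually (eventually_gt_nhds (half_lt_self hc1pos))
      filter_upwards [h1, self_mem_nhdsWithin] with s hs1 hs2
      have : 0 < p 1 s / s := lt_trans (by positivity) hs1
      exact (div_pos_iff.mp this).resolve_right (fun h => absurd hs2 (by simp; linarith [h.2])) |>.1
    have heq : ∀ᶠ s in nhdsWithin 0 (Set.Ioi 0),
        p 0 s = (p 1 (s + s) / (s + s)) / (p 1 s / s) := by
      filter_upwards [hev, self_mem_nhdsWithin] with s h1 hs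
      have hs' : (0:ℝ) < s := hs
      rw [hp1double s hs'.le]
      field_simp
      ring
    have hdiv : Tendsto (fun s => (p 1 (s + s) / (s + s)) / (p 1 s / s))
        (nhdsWithin 0 (Set.Ioi 0)) (nhds 1) := by
      have := Tendsto.div (hlim2 1 le_rfl) (hlim 1 le_rfl) hc1pos.ne'
      rw [div_self hc1pos.ne'] at this
      exact this
    refine Filter.Tendsto.congr' ?_ hdiv
    filter_upwards [heq] with s hs
    exact hs.symm
  have hp0powmul : ∀ (n : ℕ) (x : ℝ), 0 ≤ x →
      p 0 (((n : ℝ) + 1) * x) = (p 0 x) ^ (n + 1) := by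
    intro n
    induction n with
    | zero => intro x hx; simp
    | succ n ihn =>
      intro x hx
      push_cast
      have h1 : ((n:ℝ) + 1 + 1) * x = ((n:ℝ) + 1) * x + x := by ring
      have h2 : (0:ℝ) ≤ ((n:ℝ) + 1) * x := mul_nonneg (by positivity) hx
      have ihn' := ihn x hx
      rw [h1, hp0mul _ x h2 hx, ihn']
      ring
  have hp0pos : ∀ s : ℝ, 0 ≤ s → 0 < p 0 s := by
    intro s hs
    rcases eq_or_lt_of_le hs with rfl | hs'
    · rw [hp00]; exact one_pos
    · have hev : ∀ᶠ x in nhdsWithin 0 (Set.Ioi 0), (1:ℝ)/2 < p 0 x :=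
        hp0lim.eventually (eventually_gt_nhds (by norm_num))
      rw [eventually_nhdsWithin_iff, Metric.eventually_nhds_iff] at hev
      obtain ⟨δ, hδpos, hball⟩ := hev
      obtain ⟨n, hns⟩ := exists_nat_gt (s / δ)
      set x : ℝ := s / ((n:ℝ) + 1) with hxdef
      have hxpos : 0 < x := by
        apply div_pos hs'
        positivity
      have hxδ : x < δ := by
        rw [hxdef, div_lt_iff₀ (by positivity)]
        have h1 : s / δ < (n:ℝ) + 1 := by linarith
        rw [div_lt_iff₀ hδpos] at h1
        linarith
      have hpx : (1:ℝ)/2 < p 0 x := by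
        apply hball _ hxpos
        rw [Real.dist_eq, sub_zero, abs_of_pos hxpos]
        exact hxδ
      have hsplit : ((n:ℝ) + 1) * x = s := by
        rw [hxdef]
        field_simp
      have hkey := hp0powmul n x hxpos.le
      rw [hsplit] at hkey
      rw [hkey]
      have hx2 : (0:ℝ) < p 0 x := by linarith
      positivity
  set G : ℝ → ℝ → ℝ := fun u s => ∑' n, p n s * u ^ n with hGdef
  have hGsummable : ∀ u s : ℝ, 0 ≤ u → u < 1 → Summable (fun n => p n s * u ^ n) := by
    intro u s hu hu1
    apply Summable.of_nonneg_of_le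
      (fun n => mul_nonneg (hpnonneg n s) (pow_nonneg hu n))
      (fun n => mul_le_of_le_one_right (hpnonneg n s) (pow_le_one₀ hu hu1.le))
    exact (hhs s).summable
  have hGle1 : ∀ u s : ℝ, 0 ≤ u → u < 1 → G u s ≤ 1 := by
    intro u s hu hu1
    rw [hGdef]
    simp only
    rw [← (hhs s).tsum_eq]
    exact Summable.tsum_le_tsum
      (fun n => mul_le_of_le_one_right (hpnonneg n s) (pow_le_one₀ hu hu1.le))
      (hGsummable u s hu hu1) (hhs s).summable
  have hGpos : ∀ u s : ℝ, 0 ≤ u → u < 1 → 0 ≤ s → 0 < G u s := by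
    intro u s hu hu1 hs
    have h1 : p 0 s * u ^ 0 ≤ G u s := by
      apply Summable.le_tsum (hGsummable u s hu hu1) 0
      intro j _
      exact mul_nonneg (hpnonneg j s) (pow_nonneg hu j)
    have h2 : 0 < p 0 s * u ^ 0 := by
      rw [pow_zero, mul_one]
      exact hp0pos s hs
    linarith
  have hGmul : ∀ u : ℝ, 0 ≤ u → u < 1 → ∀ v w : ℝ, 0 ≤ v → 0 ≤ w →
      G u (v + w) = G u v * G u w := by
    intro u hu hu1 v w hv hw
    have hnv : Summable (fun n => ‖p n v * u ^ n‖) :=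
      Summable.congr (hGsummable u v hu hu1) fun n =>
        (Real.norm_of_nonneg (mul_nonneg (hpnonneg n v) (pow_nonneg hu n))).symm
    have hnw : Summable (fun n => ‖p n w * u ^ n‖) :=
      Summable.congr (hGsummable u w hu hu1) fun n =>
        (Real.norm_of_nonneg (mul_nonneg (hpnonneg n w) (pow_nonneg hu n))).symm
    rw [hGdef]
    simp only
    rw [tsum_mul_tsum_eq_tsum_sum_range_of_summable_norm hnv hnw]
    apply tsum_congr
    intro n
    rw [hconv n v w hv hw, Finset.sum_mul]
    apply Finset.sum_congr rfl
    intro j hj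
    have hjn : j ≤ n := Nat.lt_succ_iff.mp (Finset.mem_range.mp hj)
    have : u ^ j * u ^ (n - j) = u ^ n := by
      rw [← pow_add]
      congr 1
      omega
    calc p j v * p (n - j) w * u ^ n = (p j v * u ^ j) * (p (n - j) w * u ^ (n - j)) := by
          rw [← this]; ring
      _ = _ := rfl
  set ψ : ℝ → ℝ := fun u => -Real.log (G u 1) with hψdef
  have hGexp : ∀ u : ℝ, 0 ≤ u → u < 1 → ∀ s : ℝ, 0 ≤ s →
      G u s = Real.exp (-(ψ u * s)) := by
    intro u hu hu1 s hs
    have h := aux_cauchy_exp (G u) (fun v w hv hw => hGmul u hu hu1 v w hv hw)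
      (fun v hv => hGpos u v hu hu1 hv) (fun v hv => hGle1 u v hu hu1) s hs
    rw [h]
    congr 1
    rw [hψdef]
    ring
  set β : ℝ := ψ 0 with hβdef
  have hG0 : ∀ s : ℝ, G 0 s = p 0 s := by
    intro s
    rw [hGdef]
    simp only
    rw [tsum_eq_single 0 (fun n hn => by rw [zero_pow hn, mul_zero])]
    simp
  have hp0exp : ∀ s : ℝ, 0 ≤ s → p 0 s = Real.exp (-(β * s)) := by
    intro s hs
    rw [← hG0 s, hGexp 0 le_rfl one_pos s hs, hβdef]
  have hψlim : ∀ u : ℝ, 0 ≤ u → u < 1 →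
      Tendsto (fun s => (1 - G u s) / s) (nhdsWithin 0 (Set.Ioi 0)) (nhds (ψ u)) := by
    intro u hu hu1
    refine (aux_exp_slope (ψ u)).congr' ?_
    filter_upwards [self_mem_nhdsWithin] with s hs
    rw [hGexp u hu hu1 s (le_of_lt hs)]
  have hins : ∀ K : ℕ, Finset.range (K+1) = insert 0 (Finset.Icc 1 K) := by
    intro K
    ext x
    simp only [Finset.mem_range, Finset.mem_insert, Finset.mem_Icc]
    omega
  have hCK : ∀ u : ℝ, ∀ K : ℕ, m ≤ K →
      ∑ k ∈ Finset.Icc 1 K, c k * u ^ k = α * ((1 + l * θ * u) ^ m - 1) := by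
    intro u K hK
    have hsub : Finset.Icc 1 m ⊆ Finset.Icc 1 K := Finset.Icc_subset_Icc_right hK
    have hzero : ∀ k ∈ Finset.Icc 1 K, k ∉ Finset.Icc 1 m → c k * u ^ k = 0 := by
      intro k hk1 hk2
      simp only [Finset.mem_Icc] at hk1 hk2
      have hmk : m < k := by omega
      rw [hcval k, Nat.choose_eq_zero_of_lt hmk]
      simp
    rw [← Finset.sum_subset hsub hzero]
    have hpow : (1 + l*θ*u)^m = ∑ k ∈ Finset.range (m+1), (l*θ*u)^k * (m.choose k : ℝ) := by
      rw [show (1 + l*θ*u) = (l*θ*u + 1) from by ring, add_pow]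
      exact Finset.sum_congr rfl fun k _ => by rw [one_pow, mul_one]
    calc ∑ k ∈ Finset.Icc 1 m, c k * u ^ k
        = ∑ k ∈ Finset.Icc 1 m, α * ((l*θ*u)^k * (m.choose k : ℝ)) := by
          refine Finset.sum_congr rfl fun k _ => ?_
          rw [hcval k, mul_pow]
          ring
      _ = α * ∑ k ∈ Finset.Icc 1 m, (l*θ*u)^k * (m.choose k : ℝ) := by
          rw [Finset.mul_sum]
      _ = α * ((1 + l * θ * u) ^ m - 1) := by
          rw [hpow, hins m, Finset.sum_insert (by simp)]
          norm_num
  have hβslope : Tendsto (fun s => (1 - p 0 s)/s) (nhdsWithin 0 (Set.Ioi 0)) (nhds β) := by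
    refine (aux_exp_slope β).congr' ?_
    filter_upwards [self_mem_nhdsWithin] with s hs
    rw [← hp0exp s (le_of_lt hs)]
  have hψval : ∀ u : ℝ, 0 ≤ u → u < 1 → ψ u = β - α * ((1 + l * θ * u) ^ m - 1) := by
    intro u hu hu1
    have hsandwich : ∀ K : ℕ,
        ψ u ≤ β - ∑ k ∈ Finset.Icc 1 K, c k * u ^ k ∧
        β * (1 - u ^ (K+1)) - ∑ k ∈ Finset.Icc 1 K, c k * u ^ k ≤ ψ u := by
      intro K
      have hsum_tendsto : Tendsto (fun s => ∑ k ∈ Finset.Icc 1 K, (p k s / s) * u ^ k)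
          (nhdsWithin 0 (Set.Ioi 0)) (nhds (∑ k ∈ Finset.Icc 1 K, c k * u ^ k)) := by
        apply tendsto_finset_sum
        intro k hk
        exact (hlim k (Finset.mem_Icc.mp hk).1).mul_const _
      have hU : Tendsto (fun s => (1 - p 0 s)/s - ∑ k ∈ Finset.Icc 1 K, (p k s / s) * u ^ k)
          (nhdsWithin 0 (Set.Ioi 0)) (nhds (β - ∑ k ∈ Finset.Icc 1 K, c k * u ^ k)) :=
        hβslope.sub hsum_tendsto
      have hL : Tendsto (fun s => ((1 - p 0 s)/s) * (1 - u^(K+1))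
            - ∑ k ∈ Finset.Icc 1 K, (p k s / s) * u ^ k)
          (nhdsWithin 0 (Set.Ioi 0))
          (nhds (β * (1 - u^(K+1)) - ∑ k ∈ Finset.Icc 1 K, c k * u ^ k)) :=
        (hβslope.mul_const _).sub hsum_tendsto
      have hptwise : ∀ s : ℝ, 0 < s →
          ((1 - p 0 s)/s) * (1 - u^(K+1)) - ∑ k ∈ Finset.Icc 1 K, (p k s / s) * u ^ k
            ≤ (1 - G u s)/s ∧
          (1 - G u s)/s ≤ (1 - p 0 s)/s - ∑ k ∈ Finset.Icc 1 K, (p k s / s) * u ^ k := by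
        intro s hs
        have hsum := hGsummable u s hu hu1
        have hsplitG : (∑ n ∈ Finset.range (K+1), p n s * u ^ n)
            + (∑' n, p (n + (K+1)) s * u ^ (n + (K+1))) = G u s :=
          Summable.sum_add_tsum_nat_add (K+1) hsum
        have hsplit1 : (∑ n ∈ Finset.range (K+1), p n s)
            + (∑' n, p (n + (K+1)) s) = 1 := by
          rw [Summable.sum_add_tsum_nat_add (K+1) (hhs s).summable, (hhs s).tsum_eq]
        set tail := ∑' n, p (n + (K+1)) s * u ^ (n + (K+1)) with htaildef
        have hsumshift : Summable (fun n => p (n + (K+1)) s * u ^ (n + (K+1))) :=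
          (summable_nat_add_iff (f := fun n => p n s * u ^ n) (K+1)).2 hsum
        have hsumshift2 : Summable (fun n => p (n + (K+1)) s) :=
          (summable_nat_add_iff (f := fun n => p n s) (K+1)).2 (hhs s).summable
        have htail_nonneg : 0 ≤ tail :=
          tsum_nonneg fun n => mul_nonneg (hpnonneg _ _) (pow_nonneg hu _)
        have htail_le : tail ≤ u^(K+1) * (1 - p 0 s) := by
          have h1 : tail ≤ ∑' n, p (n + (K+1)) s * u ^ (K+1) := by
            apply Summable.tsum_le_tsum _ hsumshift (hsumshift2.mul_right _)
            intro n
            exact mul_le_mul_of_nonneg_left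
              (pow_le_pow_of_le_one hu hu1.le (by omega)) (hpnonneg _ _)
          have h2 : ∑' n, p (n + (K+1)) s * u ^ (K+1)
              = u^(K+1) * ∑' n, p (n + (K+1)) s := by
            rw [tsum_mul_right]
            ring
          have h4 : p 0 s ≤ ∑ n ∈ Finset.range (K+1), p n s :=
            Finset.single_le_sum (f := fun n => p n s) (fun n _ => hpnonneg n s)
              (Finset.mem_range.mpr (by omega))
          have h3 : ∑' n, p (n + (K+1)) s ≤ 1 - p 0 s := by linarith
          calc tail ≤ u^(K+1) * ∑' n, p (n + (K+1)) s := by rw [← h2]; exact h1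
            _ ≤ u^(K+1) * (1 - p 0 s) := mul_le_mul_of_nonneg_left h3 (pow_nonneg hu _)
        have hSFull : ∑ n ∈ Finset.range (K+1), p n s * u ^ n
            = p 0 s + ∑ k ∈ Finset.Icc 1 K, p k s * u ^ k := by
          rw [hins K, Finset.sum_insert (by simp)]
          simp
        have hG_eq : G u s = p 0 s + (∑ k ∈ Finset.Icc 1 K, p k s * u ^ k) + tail := by
          rw [← hsplitG, hSFull]
        have hdivsum : ∑ k ∈ Finset.Icc 1 K, (p k s / s) * u ^ k
            = (∑ k ∈ Finset.Icc 1 K, p k s * u ^ k)/s := by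
          rw [Finset.sum_div]
          exact Finset.sum_congr rfl fun k _ => by ring
        constructor
        · rw [hG_eq, hdivsum]
          have e1 : ((1 - p 0 s)/s) * (1 - u^(K+1))
              - (∑ k ∈ Finset.Icc 1 K, p k s * u ^ k)/s
              = ((1 - p 0 s) * (1 - u^(K+1)) - ∑ k ∈ Finset.Icc 1 K, p k s * u ^ k)/s := by
            field_simp
          rw [e1]
          apply div_le_div_of_nonneg_right ?_ hs.le
          · nlinarith [htail_le]
        · rw [hG_eq, hdivsum]
          have e2 : (1 - p 0 s)/s - (∑ k ∈ Finset.Icc 1 K, p k s * u ^ k)/s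
              = ((1 - p 0 s) - ∑ k ∈ Finset.Icc 1 K, p k s * u ^ k)/s := by
            field_simp
          rw [e2]
          apply div_le_div_of_nonneg_right ?_ hs.le
          · linarith
      constructor
      · refine le_of_tendsto_of_tendsto (hψlim u hu hu1) hU ?_
        filter_upwards [self_mem_nhdsWithin] with s hs
        exact (hptwise s hs).2
      · refine le_of_tendsto_of_tendsto hL (hψlim u hu hu1) ?_
        filter_upwards [self_mem_nhdsWithin] with s hs
        exact (hptwise s hs).1
    have hub := (hsandwich m).1
    rw [hCK u m le_rfl] at hub
    have hlb : β - α * ((1 + l*θ*u)^m - 1) ≤ ψ u := by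
      have htend : Tendsto (fun K : ℕ => β * (1 - u ^ (K + 1))
          - α * ((1 + l*θ*u)^m - 1)) atTop
          (nhds (β * (1 - 0) - α * ((1 + l*θ*u)^m - 1))) := by
        apply Tendsto.sub_const
        apply Tendsto.const_mul
        apply Tendsto.const_sub
        exact (tendsto_pow_atTop_nhds_zero_of_lt_one hu hu1).comp
          (tendsto_add_atTop_nat 1)
      have hev : ∀ᶠ K in atTop, β * (1 - u ^ (K+1)) - α * ((1 + l*θ*u)^m - 1) ≤ ψ u := by
        filter_upwards [eventually_ge_atTop m] with K hK
        have h5 := (hsandwich K).2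
        rw [hCK u K hK] at h5
        exact h5
      have := le_of_tendsto htend hev
      simpa using this
    linarith
  have huev : ∀ᶠ u in nhdsWithin 1 (Set.Iio 1), (0:ℝ) ≤ u ∧ u < 1 := by
    have h1 : Set.Ioo (0:ℝ) 1 ∈ nhdsWithin 1 (Set.Iio 1) :=
      Ioo_mem_nhdsLT_of_mem (by constructor <;> norm_num)
    filter_upwards [h1] with u hu
    exact ⟨hu.1.le, hu.2⟩
  have hβval : β = α * ((1 + l * θ) ^ m - 1) := by
    have hT1 : Tendsto (fun u => G u 1) (nhdsWithin 1 (Set.Iio 1)) (nhds 1) := by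
      rw [tendsto_order]
      constructor
      · intro a ha
        obtain ⟨n0, hn0⟩ := ((hhs 1).tendsto_sum_nat.eventually
          (eventually_gt_nhds (show (a+1)/2 < 1 by linarith))).exists
        have hcont : Tendsto (fun u : ℝ => ∑ k ∈ Finset.range n0, p k 1 * u ^ k)
            (nhdsWithin 1 (Set.Iio 1)) (nhds (∑ k ∈ Finset.range n0, p k 1 * 1 ^ k)) := by
          apply Continuous.tendsto ?_ 1 |>.mono_left nhdsWithin_le_nhds
          exact continuous_finset_sum _ fun k _ => continuous_const.mul (continuous_pow k)
        simp only [one_pow, mul_one] at hcont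
        have hgt : ∀ᶠ u in nhdsWithin 1 (Set.Iio 1),
            (a+1)/2 < ∑ k ∈ Finset.range n0, p k 1 * u ^ k :=
          hcont.eventually (eventually_gt_nhds hn0)
        filter_upwards [hgt, huev] with u h1 h2
        have h3 : ∑ k ∈ Finset.range n0, p k 1 * u ^ k ≤ G u 1 :=
          Summable.sum_le_tsum (Finset.range n0)
            (fun k _ => mul_nonneg (hpnonneg _ _) (pow_nonneg h2.1 _))
            (hGsummable u 1 h2.1 h2.2)
        linarith
      · intro a ha
        filter_upwards [huev] with u hu
        exact lt_of_le_of_lt (hGle1 u 1 hu.1 hu.2) ha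
    have hT2 : Tendsto (fun u => G u 1) (nhdsWithin 1 (Set.Iio 1))
        (nhds (Real.exp (α * ((1 + l*θ*1)^m - 1) - β))) := by
      have hcont : Tendsto (fun u : ℝ => Real.exp (α * ((1 + l*θ*u)^m - 1) - β))
          (nhdsWithin 1 (Set.Iio 1)) (nhds (Real.exp (α * ((1 + l*θ*1)^m - 1) - β))) := by
        apply Continuous.tendsto ?_ 1 |>.mono_left nhdsWithin_le_nhds
        apply Real.continuous_exp.comp
        apply Continuous.sub ?_ continuous_const
        apply continuous_const.mul
        apply Continuous.sub ?_ continuous_const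
        exact (continuous_const.add (continuous_const.mul continuous_id)).pow m
      refine hcont.congr' ?_
      filter_upwards [huev] with u hu
      rw [hGexp u hu.1 hu.2 1 zero_le_one, hψval u hu.1 hu.2]
      congr 1
      ring
    have hone := tendsto_nhds_unique hT1 hT2
    have h7 : α * ((1 + l*θ*1)^m - 1) - β = 0 := by
      have h8 := congrArg Real.log hone
      rw [Real.log_one, Real.log_exp] at h8
      linarith
    have h6 : (1 + l*θ*1 : ℝ) = 1 + l*θ := by ring
    rw [h6] at h7
    linarith
  have hdegExp : ∀ x : ℝ, degExp l 1 x = (1 + l * x) ^ m := by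
    intro x
    show (1 + l * x) ^ ((1:ℝ) / l) = (1 + l * x) ^ m
    have hinv : (1:ℝ)/l = (m:ℝ) := by
      field_simp
      linarith [hml]
    rw [hinv, Real.rpow_natCast]
  -- final computation
  intro t ht k
  set E : ℝ := degExp l 1 θ with hEdef
  set b : ℕ → ℝ := fun n =>
    Real.exp (-(α * t * (E - 1))) * θ ^ n * φ n (α * t) / (n.factorial : ℝ) with hbdef
  have hbsum : ∀ u : ℝ, 0 < u → u < 1 → HasSum (fun n => b n * u ^ n) (G u t) := by
    intro u hu0 hu1
    have hpos : 0 < 1 + l * (θ * u) := by positivity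
    have hφs := hφ (α * t) (θ * u) hpos
    have hmul := hφs.mul_left (Real.exp (-(α * t * (E - 1))))
    have hfe : (fun n => b n * u ^ n) = (fun n => Real.exp (-(α * t * (E - 1))) *
        (φ n (α * t) * (θ * u) ^ n / (n.factorial : ℝ))) := by
      funext n
      rw [hbdef]
      simp only
      rw [mul_pow]
      ring
    have hsum_eq : Real.exp (-(α * t * (E - 1))) *
        Real.exp ((α * t) * (degExp l 1 (θ * u) - 1)) = G u t := by
      rw [hGexp u hu0.le hu1 t ht.le, hψval u hu0.le hu1, ← Real.exp_add]
      congr 1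
      rw [hdegExp (θ * u), hEdef, hdegExp θ]
      have h9 : l * (θ * u) = l * θ * u := by ring
      rw [h9]
      rw [hβval]
      ring
    rw [hfe, ← hsum_eq]
    exact hmul
  have hpb : ∀ n, p n t = b n := by
    have hb_half := hbsum (1/2) (by norm_num) (by norm_num)
    have h1 : Tendsto (fun n => |b n * (1/2:ℝ)^n|) atTop (nhds 0) := by
      have h2 := hb_half.summable.tendsto_atTop_zero.abs
      simpa using h2
    obtain ⟨M0, hM0⟩ := h1.bddAbove_range
    have hM0' : ∀ n, |b n * (1/2:ℝ)^n| ≤ M0 := fun n => hM0 (Set.mem_range_self n)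
    have hM0nn : 0 ≤ M0 := le_trans (abs_nonneg _) (hM0' 0)
    have hbound : ∀ n, |p n t - b n| ≤ (M0 + 1) * 2 ^ n := by
      intro n
      have hb2 : |b n| ≤ M0 * 2 ^ n := by
        have h3 := hM0' n
        rw [abs_mul, abs_pow, abs_of_nonneg (by norm_num : (0:ℝ) ≤ 1/2)] at h3
        have h4 : ((1:ℝ)/2)^n * 2^n = 1 := by
          rw [← mul_pow]
          norm_num
        calc |b n| = |b n| * (((1:ℝ)/2)^n * 2^n) := by rw [h4, mul_one]
          _ = (|b n| * ((1:ℝ)/2)^n) * 2^n := by ring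
          _ ≤ M0 * 2^n := mul_le_mul_of_nonneg_right h3 (by positivity)
      have hp' : |p n t| ≤ 1 := abs_le.mpr ⟨by linarith [hpnonneg n t], hple n t⟩
      have h5 : (1:ℝ) ≤ 2^n := one_le_pow₀ (by norm_num)
      calc |p n t - b n| = |p n t + -(b n)| := by rw [sub_eq_add_neg]
        _ ≤ |p n t| + |-(b n)| := abs_add_le _ _
        _ = |p n t| + |b n| := by rw [abs_neg]
        _ ≤ 1 + M0 * 2^n := add_le_add hp' hb2
        _ ≤ (M0 + 1) * 2^n := by nlinarith [h5, hM0nn]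
    have hzero : ∀ u : ℝ, 0 < u → u ≤ 1 / (2 * 2) →
        HasSum (fun n => (p n t - b n) * u ^ n) 0 := by
      intro u hu0 hu4
      have hu1 : u < 1 := by linarith
      have hpsum : HasSum (fun n => p n t * u ^ n) (G u t) := by
        rw [hGdef]
        exact (hGsummable u t hu0.le hu1).hasSum
      have hbs := hbsum u hu0 hu1
      have h6 := hpsum.sub hbs
      simpa [sub_mul] using h6
    have hzz := aux_coeff_unique (fun n => p n t - b n) (M0 + 1) 2
      (by norm_num) (by linarith) hbound hzero
    intro n
    have := hzz n
    linarith
  show P {ω | N t ω = k} = ENNReal.ofReal (b k)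
  rw [← hpb k]
  exact (ENNReal.ofReal_toReal (measure_ne_top P _)).symm
end
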